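/- arXiv:2101.03519 — 5 statements merged into one kernel-verified Lean document; each statement's English description precedes it below -/
import Mathlib

section
/- Let S and T be two distinct vertices of G. There exists a non-separating path from S to T if and only if S and T are not separated by a bridge (i.e. for every bridge e of G, the vertices S and T lie in the same connected component of G with e deleted). -/
open SimpleGraph

namespace NSP

variable {V : Type*}

/-- A chordal graph: every cycle with at least four vertices has a chord,
i.e. an edge not on the cycle joining two vertices of the cycle. -/
def Chordal (G : SimpleGraph V) : Prop :=
  ∀ ⦃v : V⦄ (c : G.Walk v v), c.IsCycle → 4 ≤ c.length →
    ∃ u w : V, u ∈ c.support ∧ w ∈ c.support ∧ G.Adj u w ∧ s(u, w) ∉ c.edges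

/-- A path in `G`, given as a nonempty list of vertices with consecutive
vertices adjacent. -/
def IsPathSeq (G : SimpleGraph V) (p : List V) : Prop :=
  p ≠ [] ∧ p.Chain' G.Adj

/-- A simple path: a path all of whose vertices are distinct. -/
def IsSimpleSeq (G : SimpleGraph V) (p : List V) : Prop :=
  IsPathSeq G p ∧ p.Nodup

/-- The set of edges of a path sequence. -/
def edgesOf (p : List V) : Set (Sym2 V) :=
  {e | ∃ (i : ℕ) (h : i + 1 < p.length),
    e = s(p.get ⟨i, by omega⟩, p.get ⟨i + 1, h⟩)}

/-- A set of edges is separating if deleting it from `G` leaves a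
disconnected graph. -/
def Separating (G : SimpleGraph V) (D : Set (Sym2 V)) : Prop :=
  ¬ (G.deleteEdges D).Connected

/-- A path is separating if its edge set is separating. -/
def SeparatingPath (G : SimpleGraph V) (p : List V) : Prop :=
  Separating G (edgesOf p)

/-- The contiguous subpath `p_{i,j} = p_i → ⋯ → p_j`. -/
def subseq (p : List V) (i j : ℕ) : List V :=
  (p.take (j + 1)).drop i

/-- `q` is a contiguous subpath of `p`. -/
def ContigSub (q p : List V) : Prop :=
  ∃ i j : ℕ, i ≤ j ∧ j < p.length ∧ q = subseq p i j

/-- A separator path: a simple separating path that does not properly contain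
(as a contiguous subpath) a separating path. -/
def SeparatorPath (G : SimpleGraph V) (p : List V) : Prop :=
  IsSimpleSeq G p ∧ SeparatingPath G p ∧
    ∀ q : List V, ContigSub q p → q ≠ p → ¬ SeparatingPath G q

/-- `u` and `v` are weakly `p`-connected: some path between `u` and `v`
shares no edge with `p`. -/
def WeaklyConn (G : SimpleGraph V) (p : List V) (u v : V) : Prop :=
  ∃ q : List V, IsPathSeq G q ∧ q.head? = some u ∧ q.getLast? = some v ∧
    edgesOf q ∩ edgesOf p = ∅

/-- `u` and `v` are strongly `p`-connected: some path between `u` and `v`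
shares no edge with `p` and, except at its endpoints, no vertex with `p`. -/
def StronglyConn (G : SimpleGraph V) (p : List V) (u v : V) : Prop :=
  ∃ q : List V, IsPathSeq G q ∧ q.head? = some u ∧ q.getLast? = some v ∧
    edgesOf q ∩ edgesOf p = ∅ ∧
    ∀ (i : ℕ) (h : i < q.length), 0 < i → i + 1 < q.length → q.get ⟨i, h⟩ ∉ p

/-- A path `r` is traversable if some simple path from `S` to `T` contains
`r` as a contiguous subpath. -/
def Traversable (G : SimpleGraph V) (S T : V) (r : List V) : Prop :=
  ∃ p : List V, IsSimpleSeq G p ∧ p.head? = some S ∧ p.getLast? = some T ∧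
    ContigSub r p

/-- A bad vertex: the middle vertex of a traversable separator path with
exactly two edges. -/
def BadVertex (G : SimpleGraph V) (S T : V) (v : V) : Prop :=
  ∃ r : List V, SeparatorPath G r ∧ Traversable G S T r ∧ r.length = 3 ∧
    r[1]? = some v

/-- A separator path is useful if each two-edge segment is shorter than the
corresponding chord. -/
def Useful (w : Sym2 V → ℝ) (r : List V) : Prop :=
  ∀ (i : ℕ) (h : i + 2 < r.length),
    w s(r.get ⟨i, by omega⟩, r.get ⟨i + 1, by omega⟩) +
      w s(r.get ⟨i + 1, by omega⟩, r.get ⟨i + 2, h⟩) <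
      w s(r.get ⟨i, by omega⟩, r.get ⟨i + 2, h⟩)

/-- A normal separator path: traversable, useful, and with more than two
edges (i.e. at least four vertices). -/
def NormalSep (G : SimpleGraph V) (w : Sym2 V → ℝ) (S T : V) (r : List V) : Prop :=
  SeparatorPath G r ∧ Traversable G S T r ∧ Useful w r ∧ 3 < r.length

/-- `v` is an inner vertex of `r` (a vertex of `r` other than its endpoints). -/
def InnerMem (r : List V) (v : V) : Prop :=
  ∃ (i : ℕ) (h : i < r.length), 0 < i ∧ i + 1 < r.length ∧ r.get ⟨i, h⟩ = v

/-- The total length of a path with respect to edge lengths `w`. -/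
def pathLength (w : Sym2 V → ℝ) (p : List V) : ℝ :=
  ((p.zip p.tail).map fun q => w s(q.1, q.2)).sum

/-- All edges of `G` have positive length. -/
def EdgePos (G : SimpleGraph V) (w : Sym2 V → ℝ) : Prop :=
  ∀ e ∈ G.edgeSet, 0 < w e

/-- The subgraph of `G` formed by the edges of `D` together with their
endpoints. -/
def edgeSubgraph (G : SimpleGraph V) (D : Set (Sym2 V)) : G.Subgraph where
  verts := {v | ∃ e ∈ D ∩ G.edgeSet, v ∈ e}
  Adj u v := s(u, v) ∈ D ∧ G.Adj u v
  adj_sub h := h.2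
  edge_vert {v w} h := ⟨s(v, w), ⟨h.1, h.2⟩, Sym2.mem_mk_left v w⟩
  symm := ⟨fun u v h => by
    obtain ⟨h1, h2⟩ := h
    exact ⟨by rwa [Sym2.eq_swap], h2.symm⟩⟩

/-- For a simple path `P₀` in `G` and indices `i ≤ j < |P₀|`: in the graph
obtained by deleting the edges of `P₀` from `G`, vertices `P₀ₖ`
(`i ≤ k ≤ j`) of equal parity of index are in a common connected component,
while those of different parity are in different connected components. -/
def OddEvenSplit (G : SimpleGraph V) (P0 : List V) (i j : ℕ)
    (hj : j < P0.length) : Prop :=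
  (∀ (k l : ℕ) (hik : i ≤ k) (hkj : k ≤ j) (hil : i ≤ l) (hlj : l ≤ j),
      k % 2 = l % 2 →
      (G.deleteEdges (edgesOf P0)).Reachable
        (P0.get ⟨k, by omega⟩) (P0.get ⟨l, by omega⟩)) ∧
  (∀ (k l : ℕ) (hik : i ≤ k) (hkj : k ≤ j) (hil : i ≤ l) (hlj : l ≤ j),
      k % 2 ≠ l % 2 →
      ¬ (G.deleteEdges (edgesOf P0)).Reachable
        (P0.get ⟨k, by omega⟩) (P0.get ⟨l, by omega⟩))


/-- Reachability within a vertex set `s`. -/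
def RIn (K : SimpleGraph V) (s : Set V) : V → V → Prop :=
  Relation.ReflTransGen (fun u w => K.Adj u w ∧ u ∈ s ∧ w ∈ s)

namespace RIn

variable {K K' : SimpleGraph V} {s t : Set V} {x y z : V}

protected lemma refl : RIn K s x x := Relation.ReflTransGen.refl

protected lemma symm (h : RIn K s x y) : RIn K s y x :=
  haveI : Std.Symm (fun u w => K.Adj u w ∧ u ∈ s ∧ w ∈ s) := ⟨fun _ _ h => ⟨h.1.symm, h.2.2, h.2.1⟩⟩
  Std.Symm.symm (r := Relation.ReflTransGen (fun u w => K.Adj u w ∧ u ∈ s ∧ w ∈ s)) _ _ h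

protected lemma trans (h : RIn K s x y) (h' : RIn K s y z) : RIn K s x z :=
  Relation.ReflTransGen.trans h h'

protected lemma single (h : K.Adj x y) (hx : x ∈ s) (hy : y ∈ s) : RIn K s x y :=
  Relation.ReflTransGen.single ⟨h, hx, hy⟩

protected lemma head (h : K.Adj x y) (hx : x ∈ s) (hy : y ∈ s) (h' : RIn K s y z) :
    RIn K s x z :=
  Relation.ReflTransGen.head ⟨h, hx, hy⟩ h'

protected lemma tail (h' : RIn K s x y) (h : K.Adj y z) (hy : y ∈ s) (hz : z ∈ s) :
    RIn K s x z :=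
  Relation.ReflTransGen.tail h' ⟨h, hy, hz⟩

lemma mono_graph (hK : K ≤ K') (h : RIn K s x y) : RIn K' s x y :=
  Relation.ReflTransGen.mono (r := fun u w => K.Adj u w ∧ u ∈ s ∧ w ∈ s)
    (p := fun u w => K'.Adj u w ∧ u ∈ s ∧ w ∈ s) (fun _ _ h => ⟨hK h.1, h.2⟩) _ _ h

lemma mono_set (hs : s ⊆ t) (h : RIn K s x y) : RIn K t x y :=
  Relation.ReflTransGen.mono (r := fun u w => K.Adj u w ∧ u ∈ s ∧ w ∈ s)
    (p := fun u w => K.Adj u w ∧ u ∈ t ∧ w ∈ t) (fun _ _ h => ⟨h.1, hs h.2.1, hs h.2.2⟩) _ _ h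

lemma mem_left (h : RIn K s x y) (hne : x ≠ y) : x ∈ s := by
  rcases h.cases_head with h | ⟨c, hc, _⟩
  · exact absurd h hne
  · exact hc.2.1

lemma mem_right (h : RIn K s x y) (hne : x ≠ y) : y ∈ s :=
  h.symm.mem_left (Ne.symm hne)

lemma toReachable (h : RIn K s x y) : K.Reachable x y :=
  (reachable_iff_reflTransGen x y).2 (Relation.ReflTransGen.mono (r := fun u w => K.Adj u w ∧ u ∈ s ∧ w ∈ s)
    (p := K.Adj) (fun _ _ h => h.1) _ _ h)

end RIn

lemma reachable_rIn {K : SimpleGraph V} {x y : V} (h : K.Reachable x y) :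
    RIn K Set.univ x y :=
  Relation.ReflTransGen.mono (r := K.Adj)
    (p := fun u w => K.Adj u w ∧ u ∈ Set.univ ∧ w ∈ Set.univ) (fun _ _ h => ⟨h, trivial, trivial⟩)
    _ _ ((reachable_iff_reflTransGen x y).1 h)

lemma rIn_of_walk {K : SimpleGraph V} {s : Set V} : ∀ {x y : V} (w : K.Walk x y),
    (∀ z ∈ w.support, z ∈ s) → RIn K s x y := by
  intro x y w
  induction w with
  | nil => exact fun _ => RIn.refl
  | @cons u c y h p ih =>
    intro hs
    exact RIn.head h (hs u (by simp)) (hs c (by simp)) (ih fun z hz => hs z (by simp [hz]))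

lemma exists_walk_of_rIn {K : SimpleGraph V} {s : Set V} {x y : V}
    (h : RIn K s x y) (hx : x ∈ s) : ∃ w : K.Walk x y, ∀ z ∈ w.support, z ∈ s := by
  induction h with
  | refl => exact ⟨Walk.nil, by simpa⟩
  | @tail m z h1 h2 ih =>
    obtain ⟨w, hw⟩ := ih
    refine ⟨w.concat h2.1, ?_⟩
    intro u hu
    rw [Walk.support_concat, List.mem_append] at hu
    rcases hu with hu | hu
    · exact hw u hu
    · simp at hu; subst hu; exact h2.2.2

/-- Connectivity within a vertex set. -/
def ConnIn (K : SimpleGraph V) (s : Set V) : Prop :=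
  ∀ ⦃x⦄, x ∈ s → ∀ ⦃y⦄, y ∈ s → RIn K s x y

/-- A bridge within a vertex set. -/
def BrIn (G : SimpleGraph V) (s : Set V) (a b : V) : Prop :=
  G.Adj a b ∧ ¬ RIn (G.deleteEdges {s(a, b)}) s a b

/-- A simplicial vertex within a vertex set. -/
def SimpIn (G : SimpleGraph V) (s : Set V) (v : V) : Prop :=
  v ∈ s ∧ ∀ p q, G.Adj v p → G.Adj v q → p ∈ s → q ∈ s → p ≠ q → G.Adj p q


section Surgery

variable {G K : SimpleGraph V} {s t A : Set V} {x y a b v : V}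

/-- Transfer reachability from one edge-deleted graph to another, when every extra
deleted edge has both endpoints outside the ambient region or is already deleted. -/
lemma rIn_transfer {D₁ D₂ : Set (Sym2 V)}
    (h : ∀ u w, G.Adj u w → u ∈ s → w ∈ s → s(u, w) ∈ D₂ → s(u, w) ∈ D₁) :
    RIn (G.deleteEdges D₁) s x y → RIn (G.deleteEdges D₂) s x y := by
  refine Relation.ReflTransGen.mono (r := fun u w => (G.deleteEdges D₁).Adj u w ∧ u ∈ s ∧ w ∈ s)
    (p := fun u w => (G.deleteEdges D₂).Adj u w ∧ u ∈ s ∧ w ∈ s) (fun u w hw => ?_) x y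
  obtain ⟨hadj, hu, hww⟩ := hw
  rw [deleteEdges_adj] at hadj
  exact ⟨by rw [deleteEdges_adj]; exact ⟨hadj.1, fun hD => hadj.2 (h u w hadj.1 hu hww hD)⟩,
    hu, hww⟩

/-- If the two endpoints of a deleted edge stay connected, reachability is preserved. -/
lemma rIn_delete_of_rIn {e : Sym2 V} (he : e = s(a, b))
    (hR : RIn (G.deleteEdges {e}) s a b) (h : RIn G s x y) :
    RIn (G.deleteEdges {e}) s x y := by
  induction h with
  | refl => exact RIn.refl
  | @tail m z h1 h2 ih =>
    by_cases hme : s(m, z) = e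
    · rw [he, Sym2.eq_iff] at hme
      rcases hme with ⟨rfl, rfl⟩ | ⟨rfl, rfl⟩
      · exact ih.trans hR
      · exact ih.trans hR.symm
    · exact ih.tail (by rw [deleteEdges_adj]; exact ⟨h2.1, by simpa using hme⟩) h2.2.1 h2.2.2

/-- Walking towards an endpoint of `e`, one can avoid `e` and reach one of its endpoints. -/
lemma rIn_avoid_endpoint {e : Sym2 V} (he : e = s(a, b)) (h : RIn G t x a) :
    RIn (G.deleteEdges {e}) t x a ∨ RIn (G.deleteEdges {e}) t x b := by
  induction h using Relation.ReflTransGen.head_induction_on with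
  | refl => exact Or.inl RIn.refl
  | @head c m h1 h2 ih =>
    by_cases hce : s(c, m) = e
    · rw [he, Sym2.eq_iff] at hce
      rcases hce with ⟨rfl, rfl⟩ | ⟨rfl, rfl⟩
      · exact Or.inl RIn.refl
      · exact Or.inr RIn.refl
    · have hadj : (G.deleteEdges {e}).Adj c m := by
        rw [deleteEdges_adj]; exact ⟨h1.1, by simpa using hce⟩
      rcases ih with hc | hc
      · exact Or.inl (hc.head hadj h1.2.1 h1.2.2)
      · exact Or.inr (hc.head hadj h1.2.1 h1.2.2)

/-- A pair of neighbours of `v` which are not adjacent. -/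
def BadPair (K : SimpleGraph V) (s : Set V) (v : V) : Prop :=
  ∃ p q, K.Adj v p ∧ K.Adj v q ∧ p ∈ s ∧ q ∈ s ∧ p ≠ q ∧ ¬ K.Adj p q

lemma shortcut_aux (K : SimpleGraph V) (s : Set V) (v : V) :
    ∀ (n : ℕ) {x y : V} (w : K.Walk x y), w.length < n →
      (∀ z ∈ w.support, z ∈ s) → x ≠ v → y ≠ v →
      RIn K (s \ {v}) x y ∨ BadPair K s v := by
  intro n
  induction n with
  | zero => intro x y w h; omega
  | succ n ih =>
    intro x y w hlen hs hx hy
    match w with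
    | .nil => exact Or.inl RIn.refl
    | @Walk.cons _ _ _ c _ h1 w' =>
      by_cases hcv : c = v
      · subst hcv
        match w' with
        | .nil => exact absurd rfl hy
        | @Walk.cons _ _ _ d _ h2 w'' =>
          by_cases hdx : d = x
          · subst hdx
            refine ih w'' (by simp [Walk.length_cons] at hlen ⊢; omega)
              (fun z hz => hs z (by simp [hz])) hx hy
          · by_cases hadj : K.Adj x d
            · refine ih (Walk.cons hadj w'') (by simp [Walk.length_cons] at hlen ⊢; omega)
                (fun z hz => ?_) hx hy
              rw [Walk.support_cons, List.mem_cons] at hz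
              rcases hz with rfl | hz
              · exact hs z (by simp)
              · exact hs z (by simp [hz])
            · exact Or.inr ⟨x, d, h1.symm, h2, hs x (by simp), hs d (by simp),
                fun h => hdx h.symm, hadj⟩
      · have : RIn K (s \ {v}) c y ∨ BadPair K s v :=
          ih w' (by simp [Walk.length_cons] at hlen ⊢; omega)
            (fun z hz => hs z (by simp [hz])) hcv hy
        rcases this with h | h
        · exact Or.inl (h.head h1 ⟨hs x (by simp), hx⟩ ⟨hs c (by simp), hcv⟩)
        · exact Or.inr h

lemma shortcut_or_bad (h : RIn K s x y) (hx' : x ∈ s) (hx : x ≠ v) (hy : y ≠ v) :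
    RIn K (s \ {v}) x y ∨ BadPair K s v := by
  obtain ⟨w, hw⟩ := exists_walk_of_rIn h hx'
  exact shortcut_aux K s v (w.length + 1) w (Nat.lt_succ_self _) hw hx hy

/-- Removing a simplicial-like vertex preserves reachability. -/
lemma shortcut (hcl : ∀ p q, K.Adj v p → K.Adj v q → p ∈ s → q ∈ s → p ≠ q → K.Adj p q)
    (h : RIn K s x y) (hx' : x ∈ s) (hx : x ≠ v) (hy : y ≠ v) :
    RIn K (s \ {v}) x y := by
  rcases shortcut_or_bad h hx' hx hy with h | ⟨p, q, h1, h2, hp, hq, hpq, hnadj⟩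
  · exact h
  · exact absurd (hcl p q h1 h2 hp hq hpq) hnadj

/-- Finding the gate on first entry to a region `A` whose only boundary vertex is `a`. -/
lemma entry_gate {a : V} (hgate : ∀ x z, K.Adj x z → x ∈ A → z ∈ t → z ∉ A → x = a) :
    ∀ {c y : V} (w : K.Walk c y), (∀ z ∈ w.support, z ∈ t) → c ∉ A → y ∈ A →
      ∃ w₂ : K.Walk a y, w₂.length < w.length ∧ ∀ z ∈ w₂.support, z ∈ t := by
  intro c y w
  induction w with
  | nil => intro _ hc hy; exact absurd hy hc
  | @cons u d y h1 w' ih =>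
    intro ht hc hy
    by_cases hdA : d ∈ A
    · have : d = a := hgate d u h1.symm hdA (ht u (by simp)) hc
      subst this
      exact ⟨w', by simp [Walk.length_cons], fun z hz => ht z (by simp [hz])⟩
    · obtain ⟨w₂, h2, h3⟩ := ih (fun z hz => ht z (by simp [hz])) hdA hy
      exact ⟨w₂, by simp [Walk.length_cons]; omega, h3⟩

lemma confine_aux {a : V} (haA : a ∈ A) (hAt : A ⊆ t)
    (hgate : ∀ x z, K.Adj x z → x ∈ A → z ∈ t → z ∉ A → x = a) :
    ∀ (n : ℕ) {x y : V} (w : K.Walk x y), w.length < n → (∀ z ∈ w.support, z ∈ t) →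
      x ∈ A → y ∈ A → RIn K A x y := by
  intro n
  induction n with
  | zero => intro x y w h; omega
  | succ n ih =>
    intro x y w hlen ht hx hy
    match w with
    | .nil => exact RIn.refl
    | @Walk.cons _ _ _ c _ h1 w' =>
      by_cases hcA : c ∈ A
      · exact RIn.head h1 hx hcA
          (ih w' (by simp [Walk.length_cons] at hlen ⊢; omega)
            (fun z hz => ht z (by simp [hz])) hcA hy)
      · have hxa : x = a := hgate x c h1 hx (ht c (by simp)) hcA
        obtain ⟨w₂, hl, ht₂⟩ := entry_gate hgate w' (fun z hz => ht z (by simp [hz])) hcA hy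
        have := ih w₂ (by simp [Walk.length_cons] at hlen; omega) ht₂ haA hy
        exact hxa ▸ this

lemma confine {a : V} (haA : a ∈ A) (hAt : A ⊆ t)
    (hgate : ∀ x z, K.Adj x z → x ∈ A → z ∈ t → z ∉ A → x = a)
    (hx : x ∈ A) (hy : y ∈ A) (h : RIn K t x y) : RIn K A x y := by
  obtain ⟨w, hw⟩ := exists_walk_of_rIn h (hAt hx)
  exact confine_aux haA hAt hgate (w.length + 1) w (Nat.lt_succ_self _) hw hx hy

lemma exit_gate {a : V} (haA : a ∈ A) (hAt : A ⊆ t)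
    (hgate : ∀ x z, K.Adj x z → x ∈ A → z ∈ t → z ∉ A → x = a)
    (hx : x ∈ A) (hy : y ∉ A) (h : RIn K t x y) : RIn K A x a := by
  obtain ⟨w, hw⟩ := exists_walk_of_rIn h (hAt hx)
  clear h
  induction w with
  | nil => exact absurd hx hy
  | @cons u c y' h1 w' ih =>
    by_cases hcA : c ∈ A
    · exact RIn.head h1 hx hcA (ih hcA hy (fun z hz => hw z (by simp [hz])))
    · have : u = a := hgate u c h1 hx (hw c (by simp)) hcA
      exact this ▸ RIn.refl

end Surgery


section Chords

variable {K : SimpleGraph V}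

lemma adj_of_length_one : ∀ {x y : V} {p : K.Walk x y}, p.length = 1 → K.Adj x y := by
  intro x y p
  match p with
  | .nil => simp
  | .cons h p' =>
    intro hl
    simp [Walk.length_cons] at hl
    have := Walk.Nil.eq hl
    exact this ▸ h

lemma suffix_walk : ∀ {m d : V} (p : K.Walk m d) (u : V), u ∈ p.support →
    ∃ w : K.Walk u d, w.length ≤ p.length ∧ (∀ z ∈ w.support, z ∈ p.support) ∧
      (w.length = p.length → u = m) := by
  intro m d p
  induction p with
  | nil =>
    intro u hu
    simp at hu; subst hu
    exact ⟨Walk.nil, le_rfl, by simp, fun _ => rfl⟩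
  | @cons m c d h p' ih =>
    intro u hu
    by_cases hum : u = m
    · subst hum
      exact ⟨Walk.cons h p', le_rfl, fun z hz => hz, fun _ => rfl⟩
    · have hu' : u ∈ p'.support := by
        rw [Walk.support_cons, List.mem_cons] at hu
        tauto
      obtain ⟨w, h1, h2, _⟩ := ih u hu'
      exact ⟨w, by simp [Walk.length_cons]; omega,
        fun z hz => by simp [Walk.support_cons]; exact Or.inr (h2 z hz),
        fun hl => by simp [Walk.length_cons] at hl; omega⟩

lemma chord_shorten : ∀ {c d : V} (p : K.Walk c d) (u u' : V), K.Adj u u' →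
    u ∈ p.support → u' ∈ p.support → s(u, u') ∉ p.edges →
    ∃ q : K.Walk c d, q.length < p.length ∧ ∀ z ∈ q.support, z ∈ p.support := by
  intro c d p
  induction p with
  | nil =>
    intro u u' hadj hu hu' _
    simp at hu hu'
    exact absurd (hu ▸ hu' ▸ rfl : u = u') hadj.ne
  | @cons c m d h p' ih =>
    intro u u' hadj hu hu' hne
    by_cases hup : u ∈ p'.support <;> by_cases hu'p : u' ∈ p'.support
    · obtain ⟨q', hq1, hq2⟩ := ih u u' hadj hup hu'p
        (fun hmem => hne (by simp [Walk.edges_cons, hmem]))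
      exact ⟨Walk.cons h q', by simp [Walk.length_cons]; omega,
        fun z hz => by
          rw [Walk.support_cons, List.mem_cons] at hz ⊢
          exact hz.imp id (hq2 z)⟩
    · -- u ∈ p', u' = c
      have hu'c : u' = c := by
        rw [Walk.support_cons, List.mem_cons] at hu'; tauto
      subst hu'c
      obtain ⟨w, hw1, hw2, hw3⟩ := suffix_walk p' u hup
      rcases lt_or_eq_of_le hw1 with hlt | heq
      · refine ⟨Walk.cons hadj.symm w, by simp [Walk.length_cons]; omega, fun z hz => ?_⟩
        rw [Walk.support_cons, List.mem_cons] at hz ⊢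
        exact hz.imp id (fun h' => hw2 z h')
      · exact absurd (by rw [hw3 heq]; simp [Walk.edges_cons, Sym2.eq_swap] :
          s(u, u') ∈ (Walk.cons h p').edges) hne
    · -- u = c, u' ∈ p'
      have huc : u = c := by
        rw [Walk.support_cons, List.mem_cons] at hu; tauto
      subst huc
      obtain ⟨w, hw1, hw2, hw3⟩ := suffix_walk p' u' hu'p
      rcases lt_or_eq_of_le hw1 with hlt | heq
      · refine ⟨Walk.cons hadj w, by simp [Walk.length_cons]; omega, fun z hz => ?_⟩
        rw [Walk.support_cons, List.mem_cons] at hz ⊢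
        exact hz.imp id (fun h' => hw2 z h')
      · exact absurd (by rw [hw3 heq]; simp [Walk.edges_cons] :
          s(u, u') ∈ (Walk.cons h p').edges) hne
    · have huc : u = c := by
        rw [Walk.support_cons, List.mem_cons] at hu; tauto
      have hu'c : u' = c := by
        rw [Walk.support_cons, List.mem_cons] at hu'; tauto
      exact absurd (huc ▸ hu'c ▸ rfl : u = u') hadj.ne

end Chords


section Dirac

variable {G : SimpleGraph V}

lemma dirac (hch : Chordal G) :
    ∀ (n : ℕ) (s : Set V), s.Finite → s.ncard ≤ n →
      (∀ x y, x ∈ s → y ∈ s → x ≠ y → G.Adj x y) ∨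
      ∃ a b, a ≠ b ∧ ¬ G.Adj a b ∧ SimpIn G s a ∧ SimpIn G s b := by
  intro n
  induction n with
  | zero =>
    intro s hfin hcard
    left
    intro x y hx
    rw [(Set.ncard_eq_zero hfin).1 (Nat.le_zero.1 hcard)] at hx
    exact absurd hx (Set.notMem_empty x)
  | succ n ih =>
    intro s hfin hcard
    by_cases hcompl : ∀ x y, x ∈ s → y ∈ s → x ≠ y → G.Adj x y
    · exact Or.inl hcompl
    right
    push_neg at hcompl
    obtain ⟨S₀, T₀, hS₀, hT₀, hne₀, hnadj₀⟩ := hcompl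
    classical
    set Sep : Set V → Prop :=
      fun C => C ⊆ s ∧ S₀ ∉ C ∧ T₀ ∉ C ∧ ¬ RIn G (s \ C) S₀ T₀ with hSepDef
    have hSep₀ : Sep (s \ {S₀, T₀}) := by
      refine ⟨Set.diff_subset, by simp [hS₀], by simp [hT₀], fun h => ?_⟩
      rcases h.cases_head with h | ⟨z, hz, _⟩
      · exact hne₀ h
      · have hzm : z ∈ s \ (s \ {S₀, T₀}) := hz.2.2
        have : z = S₀ ∨ z = T₀ := by
          rcases hzm with ⟨hzs, hz2⟩
          by_contra hcon
          push_neg at hcon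
          exact hz2 ⟨hzs, by simp [hcon.1, hcon.2]⟩
        rcases this with rfl | rfl
        · exact hz.1.ne rfl
        · exact hnadj₀ hz.1
    have hSepNe : {k | ∃ C, Sep C ∧ C.ncard = k}.Nonempty := ⟨_, _, hSep₀, rfl⟩
    obtain ⟨C, hC, hCcard⟩ := Nat.sInf_mem hSepNe
    have hmin : ∀ C', Sep C' → C.ncard ≤ C'.ncard := fun C' h =>
      hCcard ▸ Nat.sInf_le ⟨C', h, rfl⟩
    have hCfin : C.Finite := hfin.subset hC.1
    set A₀ : Set V := {z | z ∈ s \ C ∧ RIn G (s \ C) S₀ z} with hA₀def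
    set B₀ : Set V := {z | z ∈ s \ C ∧ RIn G (s \ C) T₀ z} with hB₀def
    have hS₀A : S₀ ∈ A₀ := ⟨⟨hS₀, hC.2.1⟩, RIn.refl⟩
    have hT₀B : T₀ ∈ B₀ := ⟨⟨hT₀, hC.2.2.1⟩, RIn.refl⟩
    have hAB : ∀ z, z ∈ A₀ → z ∈ B₀ → False := fun z h1 h2 =>
      hC.2.2.2 (h1.2.trans h2.2.symm)
    have hclosA : ∀ z z', z ∈ A₀ → G.Adj z z' → z' ∈ s \ C → z' ∈ A₀ := fun z z' h1 h2 h3 =>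
      ⟨h3, h1.2.tail h2 h1.1 h3⟩
    have hclosB : ∀ z z', z ∈ B₀ → G.Adj z z' → z' ∈ s \ C → z' ∈ B₀ := fun z z' h1 h2 h3 =>
      ⟨h3, h1.2.tail h2 h1.1 h3⟩
    have hT₀nA : T₀ ∉ A₀ := fun h => hC.2.2.2 h.2
    have hS₀nB : S₀ ∉ B₀ := fun h => hC.2.2.2 h.2.symm
    have hnbrA : ∀ c ∈ C, ∃ z ∈ A₀, G.Adj c z := by
      intro c hc
      by_contra hno
      push_neg at hno
      have hCpos : 0 < C.ncard := (Set.ncard_pos hCfin).2 ⟨c, hc⟩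
      have hSep' : ¬ Sep (C \ {c}) := by
        intro h
        have h1 := hmin _ h
        have h2 : (C \ {c}).ncard = C.ncard - 1 := Set.ncard_diff_singleton_of_mem hc
        omega
      have hR : RIn G (s \ (C \ {c})) S₀ T₀ := by
        by_contra hR
        exact hSep' ⟨Set.diff_subset.trans hC.1, fun h => hC.2.1 h.1,
          fun h => hC.2.2.1 h.1, hR⟩
      have key : ∀ x, RIn G (s \ (C \ {c})) x T₀ → x ∈ A₀ → False := by
        intro x hx
        induction hx using Relation.ReflTransGen.head_induction_on with
        | refl => exact fun h => hAB T₀ h hT₀B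
        | @head x z h1 h2 ihz =>
          intro hxA
          have hzc : z ≠ c := by
            rintro rfl
            exact hno x hxA h1.1.symm
          have hz' : z ∈ s \ C := ⟨h1.2.2.1, fun hzC => h1.2.2.2 ⟨hzC, hzc⟩⟩
          exact ihz (hclosA x z hxA h1.1 hz')
      exact key S₀ hR hS₀A
    have hnbrB : ∀ c ∈ C, ∃ z ∈ B₀, G.Adj c z := by
      intro c hc
      by_contra hno
      push_neg at hno
      have hCpos : 0 < C.ncard := (Set.ncard_pos hCfin).2 ⟨c, hc⟩
      have hSep' : ¬ Sep (C \ {c}) := by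
        intro h
        have h1 := hmin _ h
        have h2 : (C \ {c}).ncard = C.ncard - 1 := Set.ncard_diff_singleton_of_mem hc
        omega
      have hR : RIn G (s \ (C \ {c})) T₀ S₀ := by
        by_contra hR
        refine hSep' ⟨Set.diff_subset.trans hC.1, fun h => hC.2.1 h.1,
          fun h => hC.2.2.1 h.1, fun h => hR h.symm⟩
      have key : ∀ x, RIn G (s \ (C \ {c})) x S₀ → x ∈ B₀ → False := by
        intro x hx
        induction hx using Relation.ReflTransGen.head_induction_on with
        | refl => exact fun h => hS₀nB h
        | @head x z h1 h2 ihz =>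
          intro hxB
          have hzc : z ≠ c := by
            rintro rfl
            exact hno x hxB h1.1.symm
          have hz' : z ∈ s \ C := ⟨h1.2.2.1, fun hzC => h1.2.2.2 ⟨hzC, hzc⟩⟩
          exact ihz (hclosB x z hxB h1.1 hz')
      exact key T₀ hR hT₀B
    have hAconn : ∀ z, RIn G (s \ C) S₀ z → RIn G A₀ S₀ z := by
      intro z h
      induction h with
      | refl => exact RIn.refl
      | @tail m z h1 h2 ih =>
        exact RIn.tail ih h2.1 ⟨h2.2.1, h1⟩ ⟨h2.2.2, RIn.tail h1 h2.1 h2.2.1 h2.2.2⟩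
    have hBconn : ∀ z, RIn G (s \ C) T₀ z → RIn G B₀ T₀ z := by
      intro z h
      induction h with
      | refl => exact RIn.refl
      | @tail m z h1 h2 ih =>
        exact RIn.tail ih h2.1 ⟨h2.2.1, h1⟩ ⟨h2.2.2, RIn.tail h1 h2.1 h2.2.1 h2.2.2⟩
    have hclq : ∀ c₁ c₂, c₁ ∈ C → c₂ ∈ C → c₁ ≠ c₂ → G.Adj c₁ c₂ := by
      intro c₁ c₂ hc₁ hc₂ hc12
      by_contra hnadj
      obtain ⟨x₁, hx₁A, hadj₁⟩ := hnbrA c₁ hc₁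
      obtain ⟨x₂, hx₂A, hadj₂⟩ := hnbrA c₂ hc₂
      obtain ⟨y₁, hy₁B, hbdj₁⟩ := hnbrB c₁ hc₁
      obtain ⟨y₂, hy₂B, hbdj₂⟩ := hnbrB c₂ hc₂
      have mkpath : ∀ (X₀ : Set V) (d₁ d₂ x₁ x₂ : V), x₁ ∈ X₀ → RIn G X₀ x₁ x₂ →
          G.Adj d₁ x₁ → G.Adj x₂ d₂ →
          ∃ p : G.Walk d₁ d₂, (∀ z ∈ p.support, z = d₁ ∨ z = d₂ ∨ z ∈ X₀) ∧ p.IsPath ∧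
            ∀ q : G.Walk d₁ d₂, (∀ z ∈ q.support, z = d₁ ∨ z = d₂ ∨ z ∈ X₀) →
              p.length ≤ q.length := by
        intro X₀ d₁ d₂ z₁ z₂ hz₁ hR h1 h2
        obtain ⟨wm, hwm⟩ := exists_walk_of_rIn hR hz₁
        have hP₁ : ∀ z ∈ (Walk.cons h1 (wm.concat h2)).support,
            z = d₁ ∨ z = d₂ ∨ z ∈ X₀ := by
          intro z hz
          rw [Walk.support_cons, List.mem_cons] at hz
          rcases hz with rfl | hz
          · exact Or.inl rfl
          · rw [Walk.support_concat, List.mem_append] at hz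
            rcases hz with hz | hz
            · exact Or.inr (Or.inr (hwm z hz))
            · simp at hz; exact Or.inr (Or.inl hz)
        have hNe : {k | ∃ w : G.Walk d₁ d₂,
            (∀ z ∈ w.support, z = d₁ ∨ z = d₂ ∨ z ∈ X₀) ∧ w.length = k}.Nonempty :=
          ⟨_, _, hP₁, rfl⟩
        obtain ⟨w₂, hPw₂, hw₂len⟩ := Nat.sInf_mem hNe
        refine ⟨w₂.bypass, fun z hz => hPw₂ z (Walk.support_bypass_subset _ hz),
          Walk.bypass_isPath _, fun q hq => ?_⟩
        calc w₂.bypass.length ≤ w₂.length := Walk.length_bypass_le _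
        _ ≤ q.length := by rw [hw₂len]; exact Nat.sInf_le ⟨q, hq, rfl⟩
      obtain ⟨p, hPp, hpPath, hpmin⟩ := mkpath A₀ c₁ c₂ x₁ x₂ hx₁A
        ((hAconn x₁ hx₁A.2).symm.trans (hAconn x₂ hx₂A.2)) hadj₁ hadj₂.symm
      obtain ⟨q, hPq, hqPath, hqmin⟩ := mkpath B₀ c₂ c₁ y₂ y₁ hy₂B
        ((hBconn y₂ hy₂B.2).symm.trans (hBconn y₁ hy₁B.2)) hbdj₂ hbdj₁.symm
      have hp0 : p.length ≠ 0 := fun h => hc12 (Walk.eq_of_length_eq_zero h)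
      have hp1 : p.length ≠ 1 := fun h => hnadj (adj_of_length_one h)
      have hq0 : q.length ≠ 0 := fun h => hc12 (Walk.eq_of_length_eq_zero h).symm
      have hq1 : q.length ≠ 1 := fun h => hnadj (adj_of_length_one h).symm
      have hc₁A : c₁ ∉ A₀ := fun h => h.1.2 hc₁
      have hc₂A : c₂ ∉ A₀ := fun h => h.1.2 hc₂
      have hc₁B : c₁ ∉ B₀ := fun h => h.1.2 hc₁
      have hc₂B : c₂ ∉ B₀ := fun h => h.1.2 hc₂
      have hps : ∀ z ∈ p.support.tail, z = c₂ ∨ z ∈ A₀ := by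
        intro z hz
        rcases hPp z (List.mem_of_mem_tail hz) with rfl | h | h
        · refine absurd hz ?_
          have hnd := hpPath.support_nodup
          rw [Walk.support_eq_cons] at hnd
          exact (List.nodup_cons.1 hnd).1
        · exact Or.inl h
        · exact Or.inr h
      have hqs : ∀ z ∈ q.support.tail, z = c₁ ∨ z ∈ B₀ := by
        intro z hz
        rcases hPq z (List.mem_of_mem_tail hz) with rfl | h | h
        · refine absurd hz ?_
          have hnd := hqPath.support_nodup
          rw [Walk.support_eq_cons] at hnd
          exact (List.nodup_cons.1 hnd).1
        · exact Or.inl h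
        · exact Or.inr h
      set w := p.append q with hwdef
      have hlen4 : 4 ≤ w.length := by
        rw [hwdef, Walk.length_append]; omega
      have hwsupp : w.support.tail = p.support.tail ++ q.support.tail := by
        rw [hwdef, Walk.support_append]
        conv_lhs => rw [Walk.support_eq_cons p]
        simp
      have hdisjt : ∀ z ∈ p.support.tail, z ∉ q.support.tail := by
        intro z hz hz'
        rcases hps z hz with rfl | hA
        · rcases hqs z hz' with h | h
          · exact hc12 h.symm
          · exact hc₂B h
        · rcases hqs z hz' with rfl | h
          · exact hc₁A hA
          · exact hAB z hA h
      have hmemboth : ∀ z, z ∈ p.support → z ∈ q.support → z = c₁ ∨ z = c₂ := by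
        intro z h1 h2
        rcases hPp z h1 with h | h | h
        · exact Or.inl h
        · exact Or.inr h
        · rcases hPq z h2 with h' | h' | h'
          · exact Or.inr h'
          · exact Or.inl h'
          · exact absurd h' (fun h'' => hAB z h h'')
      have htrail : w.IsTrail := by
        refine ⟨?_⟩
        rw [hwdef, Walk.edges_append]
        refine List.Nodup.append hpPath.isTrail.edges_nodup hqPath.isTrail.edges_nodup ?_
        have hkey : ∀ z z', s(z, z') ∈ p.edges → s(z, z') ∈ q.edges → False := by
          intro z z' hep heq
          have hadjzz : G.Adj z z' := p.adj_of_mem_edges hep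
          have hzp := Walk.fst_mem_support_of_mem_edges p hep
          have hz'p := Walk.snd_mem_support_of_mem_edges p hep
          have hzq := Walk.fst_mem_support_of_mem_edges q heq
          have hz'q := Walk.snd_mem_support_of_mem_edges q heq
          rcases hmemboth z hzp hzq with rfl | rfl <;>
            rcases hmemboth z' hz'p hz'q with rfl | rfl
          · exact hadjzz.ne rfl
          · exact hnadj hadjzz
          · exact hnadj hadjzz.symm
          · exact hadjzz.ne rfl
        exact fun e => Sym2.ind (f := fun e => e ∈ p.edges → e ∈ q.edges → False) hkey e
      have hcirc : w.IsCircuit := by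
        refine ⟨htrail, fun h => ?_⟩
        have := congrArg Walk.length h
        rw [hwdef, Walk.length_append] at this
        simp only [Walk.length_nil] at this
        omega
      have hcyc : w.IsCycle := by
        refine ⟨hcirc, ?_⟩
        rw [hwsupp]
        exact List.Nodup.append
          (hpPath.support_nodup.sublist (List.tail_sublist _))
          (hqPath.support_nodup.sublist (List.tail_sublist _)) hdisjt
      obtain ⟨u, u', hu, hu', huadj, hune⟩ := hch w hcyc hlen4
      have humem : u ∈ p.support ∨ u ∈ q.support := by
        rw [hwdef, Walk.mem_support_append_iff] at hu; exact hu
      have hu'mem : u' ∈ p.support ∨ u' ∈ q.support := by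
        rw [hwdef, Walk.mem_support_append_iff] at hu'; exact hu'
      have hnep : s(u, u') ∉ p.edges := fun h =>
        hune (by rw [hwdef, Walk.edges_append]; exact List.mem_append.2 (Or.inl h))
      have hneq : s(u, u') ∉ q.edges := fun h =>
        hune (by rw [hwdef, Walk.edges_append]; exact List.mem_append.2 (Or.inr h))
      by_cases hbp : u ∈ p.support ∧ u' ∈ p.support
      · obtain ⟨q', hlt, hsub⟩ := chord_shorten p u u' huadj hbp.1 hbp.2 hnep
        exact absurd (hpmin q' (fun z hz => hPp z (hsub z hz))) (by omega)
      by_cases hbq : u ∈ q.support ∧ u' ∈ q.support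
      · obtain ⟨q', hlt, hsub⟩ := chord_shorten q u u' huadj hbq.1 hbq.2 hneq
        exact absurd (hqmin q' (fun z hz => hPq z (hsub z hz))) (by omega)
      have hcp₁ : c₁ ∈ p.support := Walk.start_mem_support p
      have hcp₂ : c₂ ∈ p.support := Walk.end_mem_support p
      have hcq₁ : c₁ ∈ q.support := Walk.end_mem_support q
      have hcq₂ : c₂ ∈ q.support := Walk.start_mem_support q
      have hcross : (u ∈ A₀ ∧ u' ∈ B₀) ∨ (u ∈ B₀ ∧ u' ∈ A₀) := by
        rcases humem with hup | huq <;> rcases hu'mem with h'p | h'q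
        · exact absurd ⟨hup, h'p⟩ hbp
        · have h'nq : u ∉ q.support := fun h => hbq ⟨h, h'q⟩
          have huA : u ∈ A₀ := by
            rcases hPp u hup with rfl | rfl | h
            · exact absurd hcq₁ h'nq
            · exact absurd hcq₂ h'nq
            · exact h
          have h'np : u' ∉ p.support := fun h => hbp ⟨hup, h⟩
          have hu'B : u' ∈ B₀ := by
            rcases hPq u' h'q with rfl | rfl | h
            · exact absurd hcp₂ h'np
            · exact absurd hcp₁ h'np
            · exact h
          exact Or.inl ⟨huA, hu'B⟩
        · have h'nq : u' ∉ q.support := fun h => hbq ⟨huq, h⟩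
          have hu'A : u' ∈ A₀ := by
            rcases hPp u' h'p with rfl | rfl | h
            · exact absurd hcq₁ h'nq
            · exact absurd hcq₂ h'nq
            · exact h
          have hnp : u ∉ p.support := fun h => hbp ⟨h, h'p⟩
          have huB : u ∈ B₀ := by
            rcases hPq u huq with rfl | rfl | h
            · exact absurd hcp₂ hnp
            · exact absurd hcp₁ hnp
            · exact h
          exact Or.inr ⟨huB, hu'A⟩
        · exact absurd ⟨huq, h'q⟩ hbq
      rcases hcross with ⟨hA, hB⟩ | ⟨hB, hA⟩
      · exact hC.2.2.2 (hA.2.trans ((RIn.single huadj hA.1 hB.1).trans hB.2.symm))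
      · exact hC.2.2.2 (hA.2.trans ((RIn.single huadj.symm hA.1 hB.1).trans hB.2.symm))
    have side : ∀ (X₀ : Set V) (x₀ : V), x₀ ∈ X₀ → X₀ ⊆ s →
        (∀ z z', z ∈ X₀ → G.Adj z z' → z' ∈ s → z' ∈ X₀ ∪ C) →
        (X₀ ∪ C).ncard ≤ n → ∃ x ∈ X₀, SimpIn G s x := by
      intro X₀ x₀ hx₀ hXs hcl hcard'
      have key : ∀ c, SimpIn G (X₀ ∪ C) c → c ∈ X₀ → SimpIn G s c := by
        intro c hsimp hcX
        exact ⟨hXs hcX, fun p q h1 h2 hps hqs hpq =>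
          hsimp.2 p q h1 h2 (hcl c p hcX h1 hps) (hcl c q hcX h2 hqs) hpq⟩
      rcases ih (X₀ ∪ C) ((hfin.subset hXs).union hCfin) hcard' with
        hcomp' | ⟨a', b', hne', hnadj', ha', hb'⟩
      · exact ⟨x₀, hx₀, key x₀ ⟨Or.inl hx₀,
          fun p q h1 h2 hp hq hpq => hcomp' p q hp hq hpq⟩ hx₀⟩
      · rcases ha'.1 with haX | haC
        · exact ⟨a', haX, key a' ha' haX⟩
        · rcases hb'.1 with hbX | hbC
          · exact ⟨b', hbX, key b' hb' hbX⟩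
          · exact absurd (hclq a' b' haC hbC hne') hnadj'
    have hAcard : (A₀ ∪ C).ncard ≤ n := by
      have hsub : A₀ ∪ C ⊆ s \ {T₀} := by
        rintro z (hz | hz)
        · exact ⟨hz.1.1, fun h => hT₀nA (by simp only [Set.mem_singleton_iff] at h; exact h ▸ hz)⟩
        · exact ⟨hC.1 hz, fun h => hC.2.2.1 (by simp only [Set.mem_singleton_iff] at h; exact h ▸ hz)⟩
      have h1 : (A₀ ∪ C).ncard ≤ (s \ {T₀}).ncard :=
        Set.ncard_le_ncard hsub (hfin.diff)
      have h2 : (s \ {T₀}).ncard = s.ncard - 1 := Set.ncard_diff_singleton_of_mem hT₀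
      omega
    have hBcard : (B₀ ∪ C).ncard ≤ n := by
      have hsub : B₀ ∪ C ⊆ s \ {S₀} := by
        rintro z (hz | hz)
        · exact ⟨hz.1.1, fun h => hS₀nB (by simp only [Set.mem_singleton_iff] at h; exact h ▸ hz)⟩
        · exact ⟨hC.1 hz, fun h => hC.2.1 (by simp only [Set.mem_singleton_iff] at h; exact h ▸ hz)⟩
      have h1 : (B₀ ∪ C).ncard ≤ (s \ {S₀}).ncard :=
        Set.ncard_le_ncard hsub (hfin.diff)
      have h2 : (s \ {S₀}).ncard = s.ncard - 1 := Set.ncard_diff_singleton_of_mem hS₀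
      omega
    obtain ⟨a, haA, hsa⟩ := side A₀ S₀ hS₀A (fun z hz => hz.1.1)
      (fun z z' hz h1 h2 => by
        by_cases hzC : z' ∈ C
        · exact Or.inr hzC
        · exact Or.inl (hclosA z z' hz h1 ⟨h2, hzC⟩)) hAcard
    obtain ⟨b, hbB, hsb⟩ := side B₀ T₀ hT₀B (fun z hz => hz.1.1)
      (fun z z' hz h1 h2 => by
        by_cases hzC : z' ∈ C
        · exact Or.inr hzC
        · exact Or.inl (hclosB z z' hz h1 ⟨h2, hzC⟩)) hBcard
    exact ⟨a, b, fun h => hAB a haA (h ▸ hbB),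
      fun h => hC.2.2.2 (haA.2.trans ((RIn.single h haA.1 hbB.1).trans hbB.2.symm)),
      hsa, hsb⟩

end Dirac


section Main

variable {G : SimpleGraph V}

lemma path0 {s : Set V} {v a b : V} (hsimp : SimpIn G s v)
    (ha : a ∈ s \ {v}) (hb : b ∈ s \ {v})
    (hbr : ¬ RIn (G.deleteEdges {s(a, b)}) (s \ {v}) a b)
    (hpos : RIn (G.deleteEdges {s(a, b)}) s a b) :
    G.Adj v a ∧ G.Adj v b := by
  rcases shortcut_or_bad hpos ha.1 ha.2 hb.2 with h | ⟨p, q, h1, h2, hp, hq, hpq, hnadj⟩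
  · exact absurd h hbr
  · have h1' : G.Adj v p := ((deleteEdges_adj).1 h1).1
    have h2' : G.Adj v q := ((deleteEdges_adj).1 h2).1
    have hGadj : G.Adj p q := hsimp.2 p q h1' h2' hp hq hpq
    have heq : s(p, q) = s(a, b) := by
      by_contra hne
      exact hnadj (by rw [deleteEdges_adj]; exact ⟨hGadj, by simpa using hne⟩)
    rw [Sym2.eq_iff] at heq
    rcases heq with ⟨rfl, rfl⟩ | ⟨rfl, rfl⟩
    · exact ⟨h1', h2'⟩
    · exact ⟨h2', h1'⟩

/-- The statement of the main lemma, at level `n`. -/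
def MainP (G : SimpleGraph V) (n : ℕ) : Prop :=
  ∀ s : Set V, s.Finite → s.ncard ≤ n → ∀ S T : V, S ∈ s → T ∈ s → ConnIn G s →
    (∀ a b, a ∈ s → b ∈ s → BrIn G s a b → RIn (G.deleteEdges {s(a, b)}) s S T) →
    ∃ w : G.Walk S T, (∀ z ∈ w.support, z ∈ s) ∧
      ConnIn (G.deleteEdges {e | e ∈ w.edges}) s

lemma caseA_core {n : ℕ} {s : Set V} (hfin : s.Finite)
    (ih : MainP G n) {v a b S T : V}
    (hv : v ∈ s)
    (hcard : s.ncard ≤ n + 1)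
    (ha : a ∈ s \ {v}) (hb : b ∈ s \ {v})
    (hab : G.Adj a b)
    (hconn' : ConnIn G (s \ {v}))
    (hbr' : ¬ RIn (G.deleteEdges {s(a, b)}) (s \ {v}) a b)
    (hva : G.Adj v a) (hvb : G.Adj v b)
    (hNv : ∀ z, G.Adj v z → z ∈ s → z = a ∨ z = b)
    (hSs : S ∈ s \ {v}) (hSA : RIn (G.deleteEdges {s(a, b)}) (s \ {v}) a S)
    (hTs : T ∈ s \ {v}) (hTB : RIn (G.deleteEdges {s(a, b)}) (s \ {v}) b T)
    (Hbr : ∀ c d, c ∈ s → d ∈ s → BrIn G s c d → RIn (G.deleteEdges {s(c, d)}) s S T) :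
    ∃ w : G.Walk S T, (∀ z ∈ w.support, z ∈ s) ∧
      ConnIn (G.deleteEdges {e | e ∈ w.edges}) s := by
  classical
  set s' := s \ {v} with hs'
  set K := G.deleteEdges {s(a, b)} with hK
  set A : Set V := {z | z ∈ s' ∧ RIn K s' a z} with hAdef
  set B : Set V := {z | z ∈ s' ∧ RIn K s' b z} with hBdef
  have haA : a ∈ A := ⟨ha, RIn.refl⟩
  have hbB : b ∈ B := ⟨hb, RIn.refl⟩
  have hSA' : S ∈ A := ⟨hSs, hSA⟩
  have hTB' : T ∈ B := ⟨hTs, hTB⟩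
  have hdisj : ∀ z, z ∈ A → z ∈ B → False := fun z h1 h2 => hbr' (h1.2.trans h2.2.symm)
  have hAs : A ⊆ s := fun z hz => hz.1.1
  have hBs : B ⊆ s := fun z hz => hz.1.1
  have hVA : ∀ z, G.Adj v z → z ∈ A → z = a := by
    intro z hzadj hzA
    rcases hNv z hzadj (hAs hzA) with rfl | rfl
    · rfl
    · exact (hdisj z hzA hbB).elim
  have hVB : ∀ z, G.Adj v z → z ∈ B → z = b := by
    intro z hzadj hzB
    rcases hNv z hzadj (hBs hzB) with rfl | rfl
    · exact (hdisj z haA hzB).elim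
    · rfl
  have hgateA : ∀ x z, G.Adj x z → x ∈ A → z ∈ s → z ∉ A → x = a := by
    intro x z hadj hx hzs hznA
    by_cases hzv : z = v
    · exact hVA x (hzv ▸ hadj.symm) hx
    · have hz' : z ∈ s' := ⟨hzs, hzv⟩
      by_cases hedge : s(x, z) = s(a, b)
      · rw [Sym2.eq_iff] at hedge
        rcases hedge with ⟨rfl, rfl⟩ | ⟨rfl, rfl⟩
        · rfl
        · exact (hdisj x hx hbB).elim
      · exact absurd (⟨hz', hx.2.tail
          (by rw [hK, deleteEdges_adj]; exact ⟨hadj, by simpa using hedge⟩)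
          hx.1 hz'⟩ : z ∈ A) hznA
  have hgateB : ∀ x z, G.Adj x z → x ∈ B → z ∈ s → z ∉ B → x = b := by
    intro x z hadj hx hzs hznB
    by_cases hzv : z = v
    · exact hVB x (hzv ▸ hadj.symm) hx
    · have hz' : z ∈ s' := ⟨hzs, hzv⟩
      by_cases hedge : s(x, z) = s(a, b)
      · rw [Sym2.eq_iff] at hedge
        rcases hedge with ⟨rfl, rfl⟩ | ⟨rfl, rfl⟩
        · exact (hdisj x haA hx).elim
        · rfl
      · exact absurd (⟨hz', hx.2.tail
          (by rw [hK, deleteEdges_adj]; exact ⟨hadj, by simpa using hedge⟩)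
          hx.1 hz'⟩ : z ∈ B) hznB
  have hconnA : ConnIn G A := by
    intro x hx y hy
    have h1 : RIn K s x y := (hx.2.symm.trans hy.2).mono_set Set.diff_subset
    exact (confine haA hAs
      (fun x z hadj => hgateA x z ((deleteEdges_adj).1 hadj).1) hx hy h1).mono_graph
      (deleteEdges_le _)
  have hconnB : ConnIn G B := by
    intro x hx y hy
    have h1 : RIn K s x y := (hx.2.symm.trans hy.2).mono_set Set.diff_subset
    exact (confine hbB hBs
      (fun x z hadj => hgateB x z ((deleteEdges_adj).1 hadj).1) hx hy h1).mono_graph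
      (deleteEdges_le _)
  have HbrA : ∀ c d, c ∈ A → d ∈ A → BrIn G A c d →
      RIn (G.deleteEdges {s(c, d)}) A S a := by
    intro c d hc hd hbr
    have hgate₂ : ∀ x z, (G.deleteEdges {s(c, d)}).Adj x z → x ∈ A → z ∈ s → z ∉ A → x = a :=
      fun x z hadj => hgateA x z ((deleteEdges_adj).1 hadj).1
    have hbrs : BrIn G s c d := ⟨hbr.1, fun h => hbr.2 (confine haA hAs hgate₂ hc hd h)⟩
    exact exit_gate haA hAs hgate₂ hSA' (fun h => hdisj T h hTB')
      (Hbr c d (hAs hc) (hAs hd) hbrs)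
  have HbrB : ∀ c d, c ∈ B → d ∈ B → BrIn G B c d →
      RIn (G.deleteEdges {s(c, d)}) B b T := by
    intro c d hc hd hbr
    have hgate₂ : ∀ x z, (G.deleteEdges {s(c, d)}).Adj x z → x ∈ B → z ∈ s → z ∉ B → x = b :=
      fun x z hadj => hgateB x z ((deleteEdges_adj).1 hadj).1
    have hbrs : BrIn G s c d := ⟨hbr.1, fun h => hbr.2 (confine hbB hBs hgate₂ hc hd h)⟩
    exact (exit_gate hbB hBs hgate₂ hTB' (fun h => hdisj S hSA' h)
      (Hbr c d (hBs hc) (hBs hd) hbrs).symm).symm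
  have hscard_pos : 0 < s.ncard := (Set.ncard_pos hfin).2 ⟨v, hv⟩
  have hs'card : s'.ncard = s.ncard - 1 := Set.ncard_diff_singleton_of_mem hv
  have hAcard : A.ncard ≤ n := by
    have h1 : A ⊆ s' := fun z hz => hz.1
    have h2 := Set.ncard_le_ncard h1 (hfin.diff)
    omega
  have hBcard : B.ncard ≤ n := by
    have h1 : B ⊆ s' := fun z hz => hz.1
    have h2 := Set.ncard_le_ncard h1 (hfin.diff)
    omega
  obtain ⟨wA, hwAs, hwAconn⟩ := ih A (hfin.subset hAs) hAcard S a hSA' haA hconnA HbrA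
  obtain ⟨wB, hwBs, hwBconn⟩ := ih B (hfin.subset hBs) hBcard b T hbB hTB' hconnB HbrB
  refine ⟨wA.append (Walk.cons hab wB), ?_, ?_⟩
  · intro z hz
    rw [Walk.mem_support_append_iff] at hz
    rcases hz with hz | hz
    · exact hAs (hwAs z hz)
    · rw [Walk.support_cons, List.mem_cons] at hz
      rcases hz with rfl | hz
      · exact hAs haA
      · exact hBs (hwBs z hz)
  · set D : Set (Sym2 V) := {e | e ∈ (wA.append (Walk.cons hab wB)).edges} with hD
    have hDmem : ∀ e, e ∈ D ↔ e ∈ wA.edges ∨ e = s(a, b) ∨ e ∈ wB.edges := by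
      intro e
      rw [hD]
      simp [Walk.edges_append, Walk.edges_cons]
    have hwAedge : ∀ u u', s(u, u') ∈ wA.edges → u ∈ A ∧ u' ∈ A := fun u u' h =>
      ⟨hwAs u (Walk.fst_mem_support_of_mem_edges wA h),
       hwAs u' (Walk.snd_mem_support_of_mem_edges wA h)⟩
    have hwBedge : ∀ u u', s(u, u') ∈ wB.edges → u ∈ B ∧ u' ∈ B := fun u u' h =>
      ⟨hwBs u (Walk.fst_mem_support_of_mem_edges wB h),
       hwBs u' (Walk.snd_mem_support_of_mem_edges wB h)⟩
    have htrA : ∀ x y, RIn (G.deleteEdges {e | e ∈ wA.edges}) A x y →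
        RIn (G.deleteEdges D) A x y := by
      intro x y
      refine rIn_transfer (fun u u' hadj hu hu' hD' => ?_)
      rcases (hDmem _).1 hD' with h | h | h
      · exact h
      · rw [Sym2.eq_iff] at h
        rcases h with ⟨rfl, rfl⟩ | ⟨rfl, rfl⟩
        · exact (hdisj u' hu' hbB).elim
        · exact (hdisj u hu hbB).elim
      · exact (hdisj u hu (hwBedge u u' h).1).elim
    have htrB : ∀ x y, RIn (G.deleteEdges {e | e ∈ wB.edges}) B x y →
        RIn (G.deleteEdges D) B x y := by
      intro x y
      refine rIn_transfer (fun u u' hadj hu hu' hD' => ?_)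
      rcases (hDmem _).1 hD' with h | h | h
      · exact (hdisj u (hwAedge u u' h).1 hu).elim
      · rw [Sym2.eq_iff] at h
        rcases h with ⟨rfl, rfl⟩ | ⟨rfl, rfl⟩
        · exact (hdisj u haA hu).elim
        · exact (hdisj u' haA hu').elim
      · exact h
    have hvD : ∀ z, s(v, z) ∉ D := by
      intro z hz
      rcases (hDmem _).1 hz with h | h | h
      · exact (hwAedge v z h).1.1.2 rfl
      · rw [Sym2.eq_iff] at h
        rcases h with ⟨h1, _⟩ | ⟨h1, _⟩
        · exact ha.2 h1.symm
        · exact hb.2 h1.symm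
      · exact (hwBedge v z h).1.1.2 rfl
    have hreachv : ∀ x, x ∈ s → RIn (G.deleteEdges D) s x v := by
      intro x hx
      by_cases hxv : x = v
      · exact hxv ▸ RIn.refl
      · have hx' : x ∈ s' := ⟨hx, hxv⟩
        have hcovx : x ∈ A ∨ x ∈ B := by
          rcases rIn_avoid_endpoint (rfl : s(a,b) = s(a,b)) (hconn' hx' ha) with h | h
          · exact Or.inl ⟨hx', h.symm⟩
          · exact Or.inr ⟨hx', h.symm⟩
        rcases hcovx with hxA | hxB
        · refine ((htrA x a (hwAconn hxA haA)).mono_set hAs).tail ?_ (hAs haA) hv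
          rw [deleteEdges_adj]
          exact ⟨hva.symm, fun h => hvD a (Sym2.eq_swap ▸ h)⟩
        · refine ((htrB x b (hwBconn hxB hbB)).mono_set hBs).tail ?_ (hBs hbB) hv
          rw [deleteEdges_adj]
          exact ⟨hvb.symm, fun h => hvD b (Sym2.eq_swap ▸ h)⟩
    intro x hx y hy
    exact (hreachv x hx).trans (hreachv y hy).symm

lemma caseA {n : ℕ} {s : Set V} (hfin : s.Finite)
    (hcard : s.ncard ≤ n + 1) (ih : MainP G n) {v S T : V}
    (hsimp : SimpIn G s v) (hvS : v ≠ S) (hvT : v ≠ T)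
    (hS : S ∈ s) (hT : T ∈ s) (hST : S ≠ T) (hconn : ConnIn G s)
    (Hbr : ∀ a b, a ∈ s → b ∈ s → BrIn G s a b → RIn (G.deleteEdges {s(a, b)}) s S T) :
    ∃ w : G.Walk S T, (∀ z ∈ w.support, z ∈ s) ∧
      ConnIn (G.deleteEdges {e | e ∈ w.edges}) s := by
  classical
  set s' := s \ {v} with hs'
  have hv := hsimp.1
  have hS' : S ∈ s' := ⟨hS, fun h => hvS (Set.mem_singleton_iff.1 h).symm⟩
  have hT' : T ∈ s' := ⟨hT, fun h => hvT (Set.mem_singleton_iff.1 h).symm⟩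
  have hconn' : ConnIn G s' := fun x hx y hy =>
    shortcut (fun p q h1 h2 hp hq hpq => hsimp.2 p q h1 h2 hp hq hpq)
      (hconn hx.1 hy.1) hx.1 hx.2 hy.2
  have hscard_pos : 0 < s.ncard := (Set.ncard_pos hfin).2 ⟨v, hv⟩
  have hs'card : s'.ncard ≤ n := by
    have h1 : s'.ncard = s.ncard - 1 := Set.ncard_diff_singleton_of_mem hv
    omega
  by_cases hH : ∀ a b, a ∈ s' → b ∈ s' → BrIn G s' a b →
      RIn (G.deleteEdges {s(a, b)}) s' S T
  · obtain ⟨w, hws, hwconn⟩ := ih s' (hfin.diff) hs'card S T hS' hT' hconn' hH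
    refine ⟨w, fun z hz => (hws z hz).1, ?_⟩
    set D : Set (Sym2 V) := {e | e ∈ w.edges} with hD
    obtain ⟨c, hc', hvcadj⟩ : ∃ c, c ∈ s' ∧ G.Adj v c := by
      rcases (hconn hv hS).cases_head with h | ⟨c, hc, _⟩
      · exact absurd h hvS
      · exact ⟨c, ⟨hc.2.2, fun h => hc.1.ne (Set.mem_singleton_iff.1 h).symm⟩, hc.1⟩
    have hcD : s(v, c) ∉ D := fun h =>
      (hws v (Walk.fst_mem_support_of_mem_edges w h)).2 rfl
    have hreach : ∀ x, x ∈ s → RIn (G.deleteEdges D) s x c := by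
      intro x hx
      by_cases hxv : x = v
      · subst hxv
        exact RIn.single (by rw [deleteEdges_adj]; exact ⟨hvcadj, hcD⟩) hv hc'.1
      · exact (hwconn ⟨hx, hxv⟩ hc').mono_set Set.diff_subset
    intro x hx y hy
    exact (hreach x hx).trans (hreach y hy).symm
  · push_neg at hH
    obtain ⟨a, b, ha', hb', hbrab, hfail⟩ := hH
    set K := G.deleteEdges {s(a, b)} with hK
    have hab : G.Adj a b := hbrab.1
    have hbr' : ¬ RIn K s' a b := hbrab.2
    have hpos : RIn K s a b := by
      by_cases hbrs : BrIn G s a b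
      · exfalso
        have hRS := Hbr a b ha'.1 hb'.1 hbrs
        have hcl : ∀ p q, K.Adj v p → K.Adj v q → p ∈ s → q ∈ s → p ≠ q → K.Adj p q := by
          intro p q h1 h2 hp hq hpq
          have hGpq : G.Adj p q := hsimp.2 p q ((deleteEdges_adj).1 h1).1
            ((deleteEdges_adj).1 h2).1 hp hq hpq
          rw [hK, deleteEdges_adj]
          refine ⟨hGpq, fun he => ?_⟩
          simp only [Set.mem_singleton_iff] at he
          have hpv : RIn K s p q :=
            RIn.head ((deleteEdges_adj).2 ⟨((deleteEdges_adj).1 h1).1.symm, fun hh => by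
              simp only [Set.mem_singleton_iff] at hh
              rw [Sym2.eq_iff] at hh
              rcases hh with ⟨_, h2⟩ | ⟨_, h2⟩
              · exact hb'.2 (Set.mem_singleton_iff.2 h2.symm)
              · exact ha'.2 (Set.mem_singleton_iff.2 h2.symm)⟩) hp hv
            (RIn.single ((deleteEdges_adj).2 ⟨((deleteEdges_adj).1 h2).1, fun hh => by
              simp only [Set.mem_singleton_iff] at hh
              rw [Sym2.eq_iff] at hh
              rcases hh with ⟨h1, _⟩ | ⟨h1, _⟩
              · exact ha'.2 (Set.mem_singleton_iff.2 h1.symm)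
              · exact hb'.2 (Set.mem_singleton_iff.2 h1.symm)⟩) hv hq)
          rw [Sym2.eq_iff] at he
          rcases he with ⟨rfl, rfl⟩ | ⟨rfl, rfl⟩
          · exact hbrs.2 hpv
          · exact hbrs.2 hpv.symm
        exact hfail (shortcut hcl hRS hS (fun h => hvS h.symm) (fun h => hvT h.symm))
      · rw [BrIn] at hbrs
        push_neg at hbrs
        exact hbrs hab
    obtain ⟨hva, hvb⟩ := path0 hsimp ha' hb' hbr' hpos
    have hNv : ∀ z, G.Adj v z → z ∈ s → z = a ∨ z = b := by
      intro z hzadj hzs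
      have hzv : z ≠ v := fun h => hzadj.ne h.symm
      have hz' : z ∈ s' := ⟨hzs, hzv⟩
      by_contra hcon
      push_neg at hcon
      have hza : G.Adj z a := hsimp.2 z a hzadj hva hzs ha'.1 hcon.1
      have hzb : G.Adj z b := hsimp.2 z b hzadj hvb hzs hb'.1 hcon.2
      have hKa : K.Adj a z := by
        rw [hK, deleteEdges_adj]
        refine ⟨hza.symm, fun h => ?_⟩
        simp only [Set.mem_singleton_iff, Sym2.eq_iff] at h
        rcases h with ⟨_, h2⟩ | ⟨h1, h2⟩
        · exact hcon.2 h2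
        · exact hcon.1 h2
      have hKb : K.Adj z b := by
        rw [hK, deleteEdges_adj]
        refine ⟨hzb, fun h => ?_⟩
        simp only [Set.mem_singleton_iff, Sym2.eq_iff] at h
        rcases h with ⟨h1, _⟩ | ⟨h1, h2⟩
        · exact hcon.1 h1
        · exact hcon.2 h1
      exact hbr' (RIn.head hKa ha' hz' (RIn.single hKb hz' hb'))
    have hcov : ∀ z, z ∈ s' → RIn K s' a z ∨ RIn K s' b z := by
      intro z hz
      rcases rIn_avoid_endpoint (rfl : s(a,b) = s(a,b)) (hconn' hz ha') with h | h
      · exact Or.inl h.symm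
      · exact Or.inr h.symm
    rcases hcov S hS' with hSa | hSb <;> rcases hcov T hT' with hTa | hTb
    · exact absurd (hSa.symm.trans hTa) hfail
    · exact caseA_core hfin ih hv hcard ha' hb' hab hconn' hbr' hva hvb hNv
        hS' hSa hT' hTb Hbr
    · -- swapped roles of a and b
      have hswap : s(b, a) = s(a, b) := Sym2.eq_swap
      have hbr'' : ¬ RIn (G.deleteEdges {s(b, a)}) s' b a := by
        rw [hswap]; exact fun h => hbr' h.symm
      have hSb' : RIn (G.deleteEdges {s(b, a)}) s' b S := by rw [hswap]; exact hSb
      have hTa' : RIn (G.deleteEdges {s(b, a)}) s' a T := by rw [hswap]; exact hTa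
      exact caseA_core hfin ih hv hcard hb' ha' hab.symm hconn' hbr'' hvb hva
        (fun z h1 h2 => (hNv z h1 h2).symm) hS' hSb' hT' hTa' Hbr
    · exact absurd (hSb.symm.trans hTb) hfail


lemma caseB {n : ℕ} {s : Set V} (hfin : s.Finite)
    (hcard : s.ncard ≤ n + 1) (ih : MainP G n) {S T : V}
    (hsimp : SimpIn G s S) (hT : T ∈ s) (hST : S ≠ T) (hnadj : ¬ G.Adj S T)
    (hconn : ConnIn G s)
    (Hbr : ∀ a b, a ∈ s → b ∈ s → BrIn G s a b → RIn (G.deleteEdges {s(a, b)}) s S T) :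
    ∃ w : G.Walk S T, (∀ z ∈ w.support, z ∈ s) ∧
      ConnIn (G.deleteEdges {e | e ∈ w.edges}) s := by
  classical
  have hS := hsimp.1
  set s' := s \ {S} with hs'
  have hT' : T ∈ s' := ⟨hT, fun h => hST (Set.mem_singleton_iff.1 h).symm⟩
  have hconn' : ConnIn G s' := fun x hx y hy =>
    shortcut (fun p q h1 h2 hp hq hpq => hsimp.2 p q h1 h2 hp hq hpq)
      (hconn hx.1 hy.1) hx.1 hx.2 hy.2
  have hscard_pos : 0 < s.ncard := (Set.ncard_pos hfin).2 ⟨S, hS⟩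
  have hs'card : s'.ncard ≤ n := by
    have h1 : s'.ncard = s.ncard - 1 := Set.ncard_diff_singleton_of_mem hS
    omega
  obtain ⟨x₀, hx₀s, hx₀adj⟩ : ∃ x, x ∈ s' ∧ G.Adj S x := by
    rcases (hconn hS hT).cases_head with h | ⟨c, hc, _⟩
    · exact absurd h hST
    · exact ⟨c, ⟨hc.2.2, fun h => hc.1.ne (Set.mem_singleton_iff.1 h).symm⟩, hc.1⟩
  obtain ⟨y₀, hy₀s, hy₀adj, hyx⟩ : ∃ y, y ∈ s' ∧ G.Adj S y ∧ y ≠ x₀ := by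
    by_contra hno
    push_neg at hno
    have hbr : BrIn G s S x₀ := by
      refine ⟨hx₀adj, fun h => ?_⟩
      rcases h.cases_head with h' | ⟨z, hz, _⟩
      · exact hx₀adj.ne h'
      · have hzadj : G.Adj S z := ((deleteEdges_adj).1 hz.1).1
        have hz' : z ∈ s' := ⟨hz.2.2, fun hh => hzadj.ne (Set.mem_singleton_iff.1 hh).symm⟩
        have hzx : z = x₀ := hno z hz' hzadj
        subst hzx
        exact ((deleteEdges_adj).1 hz.1).2 rfl
    have hR := Hbr S x₀ hS hx₀s.1 hbr
    rcases hR.cases_head with h' | ⟨z, hz, _⟩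
    · exact hST h'
    · have hzadj : G.Adj S z := ((deleteEdges_adj).1 hz.1).1
      have hz' : z ∈ s' := ⟨hz.2.2, fun hh => hzadj.ne (Set.mem_singleton_iff.1 hh).symm⟩
      have hzx := hno z hz' hzadj
      subst hzx
      exact ((deleteEdges_adj).1 hz.1).2 rfl
  by_cases hgood : ∃ x, G.Adj S x ∧ x ∈ s' ∧ ∀ c d, c ∈ s' → d ∈ s' → BrIn G s' c d →
      RIn (G.deleteEdges {s(c, d)}) s' x T
  · obtain ⟨x, hxadj, hxs, hH⟩ := hgood
    obtain ⟨w', hw's, hw'conn⟩ := ih s' (hfin.diff) hs'card x T hxs hT' hconn' hH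
    obtain ⟨y, hys, hyadj, hyne⟩ : ∃ y, y ∈ s' ∧ G.Adj S y ∧ y ≠ x := by
      by_cases hxx : x = x₀
      · exact ⟨y₀, hy₀s, hy₀adj, fun h => hyx (h.trans hxx)⟩
      · exact ⟨x₀, hx₀s, hx₀adj, fun h => hxx h.symm⟩
    refine ⟨Walk.cons hxadj w', ?_, ?_⟩
    · intro z hz
      rw [Walk.support_cons, List.mem_cons] at hz
      rcases hz with rfl | hz
      · exact hS
      · exact (hw's z hz).1
    · set D : Set (Sym2 V) := {e | e ∈ (Walk.cons hxadj w').edges} with hD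
      have hDmem : ∀ e, e ∈ D ↔ e = s(S, x) ∨ e ∈ w'.edges := by
        intro e; rw [hD]; simp [Walk.edges_cons]
      have hw'edge : ∀ u u', s(u, u') ∈ w'.edges → u ∈ s' ∧ u' ∈ s' := fun u u' h =>
        ⟨hw's u (Walk.fst_mem_support_of_mem_edges w' h),
         hw's u' (Walk.snd_mem_support_of_mem_edges w' h)⟩
      have hSyD : s(S, y) ∉ D := by
        intro h
        rcases (hDmem _).1 h with h | h
        · rw [Sym2.eq_iff] at h
          rcases h with ⟨_, h2⟩ | ⟨h1, _⟩
          · exact hyne h2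
          · exact hxadj.ne' (h1 ▸ rfl)
        · exact (hw'edge S y h).1.2 rfl
      have htr : ∀ u w'', RIn (G.deleteEdges {e | e ∈ w'.edges}) s' u w'' →
          RIn (G.deleteEdges D) s' u w'' := by
        intro u w''
        refine rIn_transfer (fun p p' hadj hp hp' hD' => ?_)
        rcases (hDmem _).1 hD' with h | h
        · rw [Sym2.eq_iff] at h
          rcases h with ⟨h1, _⟩ | ⟨_, h1⟩
          · exact absurd (h1 ▸ hp : S ∈ s') (fun hh => hh.2 rfl)
          · exact absurd (h1 ▸ hp' : S ∈ s') (fun hh => hh.2 rfl)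
        · exact h
      have hreach : ∀ z, z ∈ s → RIn (G.deleteEdges D) s z y := by
        intro z hz
        by_cases hzS : z = S
        · subst hzS
          exact RIn.single (by rw [deleteEdges_adj]; exact ⟨hyadj, hSyD⟩) hS hys.1
        · exact ((htr z y (hw'conn ⟨hz, hzS⟩ hys)).mono_set Set.diff_subset)
      intro p hp q hq
      exact (hreach p hp).trans (hreach q hq).symm
  · push_neg at hgood
    have analyze : ∀ x c d, G.Adj S x → x ∈ s' → c ∈ s' → d ∈ s' → BrIn G s' c d →
        ¬ RIn (G.deleteEdges {s(c, d)}) s' x T →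
        G.Adj S c ∧ G.Adj S d ∧ ∀ z, G.Adj S z → z ∈ s' → z = c ∨ z = d := by
      intro x c d hxadj hxs hcs hds hbrcd hfailx
      set K := G.deleteEdges {s(c, d)} with hKdef
      have hcd : G.Adj c d := hbrcd.1
      have hedgeS : ∀ z, s(S, z) ≠ s(c, d) := by
        intro z h
        rw [Sym2.eq_iff] at h
        rcases h with ⟨h1, _⟩ | ⟨h1, _⟩
        · exact hcs.2 (Set.mem_singleton_iff.2 h1.symm)
        · exact hds.2 (Set.mem_singleton_iff.2 h1.symm)
      have hpos : RIn K s c d := by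
        by_cases hbrs : BrIn G s c d
        · exfalso
          have hRS := Hbr c d hcs.1 hds.1 hbrs
          rcases hRS.cases_head with h' | ⟨z, hz, htail⟩
          · exact hST h'
          · have hzadjS : G.Adj S z := ((deleteEdges_adj).1 hz.1).1
            have hz' : z ∈ s' := ⟨hz.2.2, fun hh => hzadjS.ne (Set.mem_singleton_iff.1 hh).symm⟩
            have hcl : ∀ p q, K.Adj S p → K.Adj S q → p ∈ s → q ∈ s → p ≠ q → K.Adj p q := by
              intro p q h1 h2 hp hq hpq
              have hGpq : G.Adj p q := hsimp.2 p q ((deleteEdges_adj).1 h1).1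
                ((deleteEdges_adj).1 h2).1 hp hq hpq
              rw [hKdef, deleteEdges_adj]
              refine ⟨hGpq, fun he => ?_⟩
              simp only [Set.mem_singleton_iff] at he
              have hpq' : RIn K s p q :=
                RIn.head ((deleteEdges_adj).2 ⟨((deleteEdges_adj).1 h1).1.symm,
                  fun hh => hedgeS p (Sym2.eq_swap.symm ▸ hh)⟩) hp hS
                (RIn.single ((deleteEdges_adj).2 ⟨((deleteEdges_adj).1 h2).1,
                  fun hh => hedgeS q hh⟩) hS hq)
              rw [Sym2.eq_iff] at he
              rcases he with ⟨rfl, rfl⟩ | ⟨rfl, rfl⟩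
              · exact hbrs.2 hpq'
              · exact hbrs.2 hpq'.symm
            have hzT : RIn K s' z T :=
              shortcut hcl htail hz.2.2 (fun h => hzadjS.ne h.symm)
                (fun h => hST h.symm)
            by_cases hzx : z = x
            · exact hfailx (hzx ▸ hzT)
            · have hGxz : G.Adj x z := hsimp.2 x z hxadj hzadjS hxs.1 hz.2.2
                (fun h => hzx h.symm)
              have hKxz : K.Adj x z := by
                rw [hKdef, deleteEdges_adj]
                refine ⟨hGxz, fun hh => ?_⟩
                simp only [Set.mem_singleton_iff] at hh
                rw [Sym2.eq_iff] at hh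
                have hxz' : RIn K s x z :=
                  RIn.head ((deleteEdges_adj).2 ⟨hxadj.symm,
                    fun h2 => hedgeS x (Sym2.eq_swap.symm ▸ h2)⟩) hxs.1 hS
                  (RIn.single ((deleteEdges_adj).2 ⟨hzadjS,
                    fun h2 => hedgeS z h2⟩) hS hz.2.2)
                rcases hh with ⟨rfl, rfl⟩ | ⟨rfl, rfl⟩
                · exact hbrs.2 hxz'
                · exact hbrs.2 hxz'.symm
              exact hfailx (RIn.head hKxz hxs hz' hzT)
        · rw [BrIn] at hbrs
          push_neg at hbrs
          exact hbrs hcd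
      obtain ⟨hSc, hSd⟩ := path0 hsimp hcs hds hbrcd.2 hpos
      refine ⟨hSc, hSd, fun z hzadj hzs => ?_⟩
      by_contra hcon
      push_neg at hcon
      have hzc : G.Adj z c := hsimp.2 z c hzadj hSc hzs.1 hcs.1 hcon.1
      have hzd : G.Adj z d := hsimp.2 z d hzadj hSd hzs.1 hds.1 hcon.2
      have hKzc : K.Adj c z := by
        rw [hKdef, deleteEdges_adj]
        refine ⟨hzc.symm, fun h => ?_⟩
        simp only [Set.mem_singleton_iff, Sym2.eq_iff] at h
        rcases h with ⟨_, h2⟩ | ⟨h1, _⟩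
        · exact hcon.2 h2
        · exact hcd.ne h1
      have hKzd : K.Adj z d := by
        rw [hKdef, deleteEdges_adj]
        refine ⟨hzd, fun h => ?_⟩
        simp only [Set.mem_singleton_iff, Sym2.eq_iff] at h
        rcases h with ⟨h1, _⟩ | ⟨h1, h2⟩
        · exact hcon.1 h1
        · exact hcon.2 h1
      exact hbrcd.2 (RIn.head hKzc hcs hzs (RIn.single hKzd hzs hds))
    obtain ⟨c, d, hcs, hds, hbrcd, hfailx⟩ := hgood x₀ hx₀adj hx₀s
    obtain ⟨hSc, hSd, hNS⟩ := analyze x₀ c d hx₀adj hx₀s hcs hds hbrcd hfailx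
    have hcdne : c ≠ d := hbrcd.1.ne
    have hset : (c = x₀ ∧ d = y₀) ∨ (c = y₀ ∧ d = x₀) := by
      rcases hNS x₀ hx₀adj hx₀s with h1 | h1 <;> rcases hNS y₀ hy₀adj hy₀s with h2 | h2
      · exact absurd (h2.trans h1.symm) hyx
      · exact Or.inl ⟨h1.symm, h2.symm⟩
      · exact Or.inr ⟨h2.symm, h1.symm⟩
      · exact absurd (h2.trans h1.symm) hyx
    have hecd : s(c, d) = s(x₀, y₀) := by
      rcases hset with ⟨rfl, rfl⟩ | ⟨rfl, rfl⟩
      · rfl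
      · exact Sym2.eq_swap
    obtain ⟨c', d', hcs', hds', hbrcd', hfaily⟩ := hgood y₀ hy₀adj hy₀s
    obtain ⟨hSc', hSd', hNS'⟩ := analyze y₀ c' d' hy₀adj hy₀s hcs' hds' hbrcd' hfaily
    have hset' : (c' = x₀ ∧ d' = y₀) ∨ (c' = y₀ ∧ d' = x₀) := by
      rcases hNS' x₀ hx₀adj hx₀s with h1 | h1 <;> rcases hNS' y₀ hy₀adj hy₀s with h2 | h2
      · exact absurd (h2.trans h1.symm) hyx
      · exact Or.inl ⟨h1.symm, h2.symm⟩
      · exact Or.inr ⟨h2.symm, h1.symm⟩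
      · exact absurd (h2.trans h1.symm) hyx
    have hecd' : s(c', d') = s(x₀, y₀) := by
      rcases hset' with ⟨rfl, rfl⟩ | ⟨rfl, rfl⟩
      · rfl
      · exact Sym2.eq_swap
    rw [hecd] at hfailx
    rw [hecd'] at hfaily
    rcases rIn_avoid_endpoint (rfl : s(x₀, y₀) = s(x₀, y₀)) (hconn' hT' hx₀s) with h | h
    · exact absurd h.symm hfailx
    · exact absurd h.symm hfaily


lemma mainAll (hch : Chordal G) : ∀ n : ℕ, MainP G n := by
  intro n
  induction n with
  | zero =>
    intro s hfin hcard S T hS hT _ _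
    rw [(Set.ncard_eq_zero hfin).1 (Nat.le_zero.1 hcard)] at hS
    exact absurd hS (Set.notMem_empty S)
  | succ n ih =>
    intro s hfin hcard S T hS hT hconn Hbr
    classical
    by_cases hST : S = T
    · subst hST
      refine ⟨Walk.nil, ?_, ?_⟩
      · intro z hz
        simp only [Walk.support_nil, List.mem_singleton] at hz
        exact hz ▸ hS
      · have hempty : {e : Sym2 V | e ∈ (Walk.nil : G.Walk S S).edges} = ∅ := by
          simp [Walk.edges_nil]
        rw [hempty, deleteEdges_empty]
        exact hconn
    by_cases hadj : G.Adj S T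
    · have hR : RIn (G.deleteEdges {s(S, T)}) s S T := by
        by_contra h
        exact h (Hbr S T hS hT ⟨hadj, h⟩)
      refine ⟨Walk.cons hadj Walk.nil, ?_, ?_⟩
      · intro z hz
        simp only [Walk.support_cons, Walk.support_nil, List.mem_cons,
          List.mem_singleton, List.not_mem_nil, or_false] at hz
        rcases hz with rfl | rfl
        · exact hS
        · exact hT
      · have hDeq : {e : Sym2 V | e ∈ (Walk.cons hadj (Walk.nil : G.Walk T T)).edges}
            = {s(S, T)} := by
          ext e
          simp [Walk.edges_cons, Walk.edges_nil]
        rw [hDeq]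
        intro x hx y hy
        exact rIn_delete_of_rIn rfl hR (hconn hx hy)
    rcases dirac hch (n + 1) s hfin hcard with hcompl | ⟨a, b, hne, hnadjab, hsa, hsb⟩
    · exact absurd (hcompl S T hS hT hST) hadj
    by_cases haST : a ≠ S ∧ a ≠ T
    · exact caseA hfin hcard ih hsa haST.1 haST.2 hS hT hST hconn Hbr
    by_cases hbST : b ≠ S ∧ b ≠ T
    · exact caseA hfin hcard ih hsb hbST.1 hbST.2 hS hT hST hconn Hbr
    push_neg at haST hbST
    have hSsimp : SimpIn G s S := by
      by_cases ha1 : a = S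
      · exact ha1 ▸ hsa
      · have haT : a = T := haST ha1
        have hbS' : b = S := by
          by_cases hb1 : b = S
          · exact hb1
          · exact absurd (haT.trans (hbST hb1).symm) hne
        exact hbS' ▸ hsb
    exact caseB hfin hcard ih hSsimp hT hST hadj hconn Hbr

end Main

section Translate

variable {G K : SimpleGraph V}

lemma chain_reachable : ∀ (l : List V) (x y : V), l.Chain' K.Adj →
    l.head? = some x → l.getLast? = some y → K.Reachable x y := by
  intro l
  induction l with
  | nil => intro x y _ h; simp at h
  | cons c t ih =>
    intro x y hch hh hl
    simp only [List.head?_cons, Option.some.injEq] at hh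
    subst hh
    match t, hch, hl with
    | [], _, hl =>
      simp only [List.getLast?_singleton, Option.some.injEq] at hl
      exact hl ▸ Reachable.refl c
    | d :: t', hch, hl =>
      have h1 : K.Adj c d := (List.isChain_cons_cons.1 hch).1
      exact h1.reachable.trans (ih d y (List.isChain_cons_cons.1 hch).2 rfl
        (by rwa [List.getLast?_cons_cons] at hl))

lemma chain_delete {e : Sym2 V} {p : List V} (hch : p.Chain' G.Adj) (he : e ∉ edgesOf p) :
    p.Chain' (G.deleteEdges {e}).Adj := by
  unfold List.Chain' at hch ⊢
  rw [List.isChain_iff_getElem] at hch ⊢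
  intro i h
  refine (deleteEdges_adj).2 ⟨hch i h, fun hmem => ?_⟩
  simp only [Set.mem_singleton_iff] at hmem
  exact he ⟨i, by omega, hmem.symm⟩

lemma edgesOf_single (a : V) : edgesOf ([a] : List V) = ∅ := by
  ext e
  simp only [edgesOf, Set.mem_setOf_eq, Set.mem_empty_iff_false, iff_false]
  rintro ⟨i, h, _⟩
  simp at h

lemma edgesOf_cons2 (a b : V) (l : List V) :
    edgesOf (a :: b :: l) = insert s(a, b) (edgesOf (b :: l)) := by
  ext e
  simp only [edgesOf, Set.mem_setOf_eq, Set.mem_insert_iff]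
  constructor
  · rintro ⟨i, h, rfl⟩
    match i with
    | 0 => exact Or.inl rfl
    | (j + 1) =>
      right
      refine ⟨j, by simpa using h, rfl⟩
  · rintro (rfl | ⟨j, h, rfl⟩)
    · exact ⟨0, by simp, rfl⟩
    · exact ⟨j + 1, by simpa using h, rfl⟩

lemma edgesOf_walk_support : ∀ {x y : V} (w : G.Walk x y),
    edgesOf w.support = {e | e ∈ w.edges} := by
  intro x y w
  induction w with
  | nil =>
    rw [Walk.support_nil, edgesOf_single]
    ext e
    simp [Walk.edges_nil]
  | @cons u c y h w ih =>
    rw [Walk.support_cons, Walk.support_eq_cons w, edgesOf_cons2,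
      ← Walk.support_eq_cons w, ih]
    ext e
    simp [Walk.edges_cons]

end Translate


/-- There exists a non-separating path from `S` to `T` if and only if `S`
and `T` are not separated by a bridge. -/
theorem exists_nonSeparating_path_iff_not_bridge_separated
    {V : Type*} [Fintype V] (G : SimpleGraph V)
    (hconn : G.Connected) (hchordal : Chordal G) (S T : V) (hST : S ≠ T) :
    (∃ p : List V, IsPathSeq G p ∧ p.head? = some S ∧ p.getLast? = some T ∧
      ¬ SeparatingPath G p) ↔
    (∀ e : Sym2 V, (e ∈ G.edgeSet ∧ G.IsBridge e) → (G.deleteEdges {e}).Reachable S T) := by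
  constructor
  · rintro ⟨p, ⟨hne, hch⟩, hh, hl, hnsep⟩ e hbr
    have hconn' : (G.deleteEdges (edgesOf p)).Connected := not_not.1 hnsep
    induction e using Sym2.ind with
    | _ u v =>
      by_cases hmem : s(u, v) ∈ edgesOf p
      · have hle : G.deleteEdges (edgesOf p) ≤ G.deleteEdges {s(u, v)} :=
          deleteEdges_anti (by simpa using hmem)
        exact (hconn'.mono hle).preconnected S T
      · exact chain_reachable p S T (chain_delete hch hmem) hh hl
  · intro hbr
    have hconn' : ConnIn G Set.univ := fun x _ y _ =>
      reachable_rIn (hconn.preconnected x y)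
    have Hbr : ∀ a b, a ∈ (Set.univ : Set V) → b ∈ (Set.univ : Set V) →
        BrIn G Set.univ a b → RIn (G.deleteEdges {s(a, b)}) Set.univ S T := by
      intro a b _ _ hbrab
      have hbridge : G.IsBridge s(a, b) := by
        rw [isBridge_iff]
        exact fun hr => hbrab.2 (reachable_rIn hr)
      exact reachable_rIn (hbr _ ⟨hbrab.1, hbridge⟩)
    obtain ⟨w, _, hwconn⟩ := mainAll hchordal (Set.univ : Set V).ncard Set.univ
      Set.finite_univ le_rfl S T (Set.mem_univ S) (Set.mem_univ T) hconn' Hbr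
    refine ⟨w.support, ⟨Walk.support_ne_nil w, Walk.isChain_adj_support w⟩, ?_, ?_, ?_⟩
    · rw [Walk.support_eq_cons]
      rfl
    · rw [List.getLast?_eq_getLast (Walk.support_ne_nil w)]
      exact congrArg some (Walk.getLast_support w)
    · intro hsep
      apply hsep
      rw [edgesOf_walk_support]
      exact (connected_iff _).2
        ⟨fun x y => (hwconn (Set.mem_univ x) (Set.mem_univ y)).toReachable, ⟨S⟩⟩

end NSP
end

section
/- Let S and T be two distinct vertices of G that are not separated by a bridge (for every bridge e of G, the vertices S and T lie in the same connected component of G with e deleted). Then any path from S to T that contains the minimum possible number of edges is a non-separating path. -/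
open SimpleGraph

namespace NSP

variable {V : Type*}

section AuxProof

variable {G : SimpleGraph V}

lemma adj_of_pathSeq {p : List V} (hp : IsPathSeq G p) {i : ℕ} (h : i + 1 < p.length) :
    G.Adj (p.get ⟨i, by omega⟩) (p.get ⟨i + 1, h⟩) :=
  List.isChain_iff_getElem.mp hp.2 i (by omega)

lemma mem_of_mem_edgesOf {p : List V} {e : Sym2 V} (he : e ∈ edgesOf p) {x : V}
    (hx : x ∈ e) : x ∈ p := by
  obtain ⟨i, h, rfl⟩ := he
  rcases Sym2.mem_iff.mp hx with rfl | rfl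
  · exact List.get_mem _ _
  · exact List.get_mem _ _

lemma glue {p : List V} (hp : IsPathSeq G p) (i k : ℕ) (hik : i < k) (hk : k ≤ p.length)
    (hi : i < p.length)
    (hadj : ∀ h : k < p.length, G.Adj (p.get ⟨i, hi⟩) (p.get ⟨k, h⟩))
    (hlast : k = p.length → p.getLast? = some (p.get ⟨i, hi⟩)) :
    ∃ q : List V, IsPathSeq G q ∧ q.head? = p.head? ∧ q.getLast? = p.getLast? ∧
      q.length = i + 1 + (p.length - k) := by
  have htake : p.take (i + 1) = p.take i ++ [p.get ⟨i, hi⟩] := by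
    rw [List.take_succ, List.getElem?_eq_getElem hi]
    simp [List.get_eq_getElem]
  refine ⟨p.take (i + 1) ++ p.drop k, ⟨?_, ?_⟩, ?_, ?_, ?_⟩
  · have hlq : 0 < (p.take (i + 1) ++ p.drop k).length := by
      simp only [List.length_append, List.length_take, List.length_drop]
      omega
    exact List.ne_nil_of_length_pos hlq
  · refine List.IsChain.append (hp.2.take _) (hp.2.drop _) ?_
    intro x hx y hy
    rw [htake, List.getLast?_concat] at hx
    rw [List.head?_drop] at hy
    by_cases hkp : k < p.length
    · rw [List.getElem?_eq_getElem hkp] at hy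
      obtain rfl : p.get ⟨i, hi⟩ = x := by simpa using hx
      obtain rfl : p[k] = y := by simpa using hy
      have := hadj hkp
      simpa [List.get_eq_getElem] using this
    · rw [List.getElem?_eq_none (by omega)] at hy
      simp at hy
  · rcases p with _ | ⟨a, t⟩
    · exact absurd rfl hp.1
    · simp [List.take_succ_cons]
  · by_cases hkp : k < p.length
    · have hdne : p.drop k ≠ [] := by
        intro h
        have := congrArg List.length h
        simp at this
        omega
      rw [List.getLast?_append_of_ne_nil _ hdne]
      conv_rhs => rw [← List.take_append_drop k p]
      rw [List.getLast?_append_of_ne_nil _ hdne]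
    · have hkp' : k = p.length := by omega
      rw [List.drop_eq_nil_of_le (by omega), List.append_nil, htake, List.getLast?_concat,
        hlast hkp']
  · simp only [List.length_append, List.length_take, List.length_drop]
    omega

lemma reach_segment (G' : SimpleGraph V) (p : List V) (a : ℕ) (b : ℕ) (hb : b < p.length)
    (hab : a ≤ b)
    (h : ∀ i, a ≤ i → i < b → (hi : i + 1 < p.length) →
      G'.Adj (p.get ⟨i, by omega⟩) (p.get ⟨i + 1, hi⟩)) :
    G'.Reachable (p.get ⟨a, by omega⟩) (p.get ⟨b, hb⟩) := by
  induction b with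
  | zero =>
    obtain rfl : a = 0 := Nat.le_zero.mp hab
    exact Reachable.refl _
  | succ d ih =>
    rcases Nat.lt_or_ge a (d + 1) with hlt | hge
    · have had : a ≤ d := by omega
      have hd : d < p.length := by omega
      refine (ih hd had (fun i hai hid hi => h i hai (by omega) hi)).trans ?_
      exact (h d had (by omega) hb).reachable
    · obtain rfl : a = d + 1 := by omega
      exact Reachable.refl _

lemma walk_take {G' : SimpleGraph V} {u v : V} (Q : G'.Walk u v) (i : ℕ) :
    ∃ W : G'.Walk u (Q.getVert i), W.length = min i Q.length := by
  induction Q generalizing i with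
  | nil => exact ⟨Walk.nil, by simp⟩
  | cons h q ih =>
    cases i with
    | zero => exact ⟨Walk.nil, rfl⟩
    | succ n =>
      obtain ⟨W, hW⟩ := ih n
      exact ⟨Walk.cons h W, by show W.length + 1 = min (n + 1) (q.length + 1); rw [hW]; omega⟩

lemma walk_drop {G' : SimpleGraph V} {u v : V} (Q : G'.Walk u v) (i : ℕ) :
    ∃ W : G'.Walk (Q.getVert i) v, W.length = Q.length - i := by
  induction Q generalizing i with
  | nil => exact ⟨Walk.nil, by simp⟩
  | cons h q ih =>
    cases i with
    | zero => exact ⟨Walk.cons h q, rfl⟩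
    | succ n =>
      obtain ⟨W, hW⟩ := ih n
      exact ⟨W, by show W.length = q.length + 1 - (n + 1); rw [hW]; omega⟩

lemma edge_mem_of_getVert {G' : SimpleGraph V} {u v : V} (Q : G'.Walk u v) (i : ℕ)
    (hi : i < Q.length) : s(Q.getVert i, Q.getVert (i + 1)) ∈ Q.edges := by
  induction Q generalizing i with
  | nil => simp at hi
  | cons h q ih =>
    cases i with
    | zero =>
      simp [Walk.edges_cons, Walk.getVert_cons_succ, Walk.getVert_zero]
    | succ n =>
      rw [Walk.getVert_cons_succ, Walk.getVert_cons_succ, Walk.edges_cons]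
      exact List.mem_cons_of_mem _ (ih n (by simpa [Walk.length_cons] using hi))

lemma exists_common_neighbor (hchordal : Chordal G) {u v : V}
    (huv : G.Adj u v) (hnb : ¬ G.IsBridge s(u, v)) :
    ∃ x : V, G.Adj u x ∧ G.Adj x v := by
  classical
  have hreach : (G.deleteEdges {s(u, v)}).Reachable u v := by
    by_contra hcon
    exact hnb (isBridge_iff.mpr hcon)
  set G' : SimpleGraph V := G.deleteEdges {s(u, v)} with hG'
  have hle : G' ≤ G := G.deleteEdges_le _
  obtain ⟨Q, hQp, hQl⟩ := hreach.exists_path_of_dist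
  have hne0 : Q.length ≠ 0 := fun h0 => huv.ne (Walk.eq_of_length_eq_zero h0)
  have hne1 : Q.length ≠ 1 := by
    intro h1
    have h01 := Q.adj_getVert_succ (i := 0) (by omega)
    rw [Walk.getVert_zero, show (0 : ℕ) + 1 = Q.length from by omega,
      Walk.getVert_length] at h01
    rw [hG', deleteEdges_adj] at h01
    exact h01.2 rfl
  by_cases h2 : Q.length = 2
  · refine ⟨Q.getVert 1, ?_, ?_⟩
    · have h01 := Q.adj_getVert_succ (i := 0) (by omega)
      rw [Walk.getVert_zero] at h01
      exact hle h01
    · have h12 := Q.adj_getVert_succ (i := 1) (by omega)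
      rw [show (1 : ℕ) + 1 = Q.length from by omega, Walk.getVert_length] at h12
      exact hle h12
  exfalso
  set Q' : G.Walk u v := Q.mapLe hle with hQ'
  have hQ'p : Q'.IsPath := Walk.IsPath.mapLe hle hQp
  have hedges : Q'.edges = Q.edges := by
    rw [hQ', Walk.mapLe, Walk.edges_map]
    apply List.map_id''
    intro e
    induction e using Sym2.ind with
    | _ x y => simp [Hom.ofLE_apply]
  have hsupp : Q'.support = Q.support := by
    rw [hQ', Walk.mapLe, Walk.support_map]
    apply List.map_id''
    intro x
    simp [Hom.ofLE_apply]
  have hQ'len : Q'.length = Q.length := Walk.length_map _ _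
  have hnotin : s(v, u) ∉ Q'.edges := by
    rw [hedges]
    intro hm
    have hE := Q.edges_subset_edgeSet hm
    rw [hG', edgeSet_deleteEdges] at hE
    exact hE.2 (by rw [Sym2.eq_swap]; rfl)
  have hcyc : (Walk.cons huv.symm Q').IsCycle := Path.cons_isCycle ⟨Q', hQ'p⟩ huv.symm hnotin
  obtain ⟨a, b, ha, hb, hab, habe⟩ := hchordal _ hcyc (by
    rw [Walk.length_cons, hQ'len]; omega)
  have hsup : ∀ x, x ∈ (Walk.cons huv.symm Q').support → x ∈ Q.support := by
    intro x hx
    rw [Walk.support_cons] at hx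
    rcases List.mem_cons.mp hx with rfl | hx
    · exact hsupp ▸ Q'.end_mem_support
    · exact hsupp ▸ hx
  obtain ⟨i, hia, hi⟩ := Walk.mem_support_iff_exists_getVert.mp (hsup a ha)
  obtain ⟨j, hjb, hj⟩ := Walk.mem_support_iff_exists_getVert.mp (hsup b hb)
  have hchordE : s(a, b) ∉ Q.edges := fun hm =>
    habe (by rw [Walk.edges_cons]; exact List.mem_cons_of_mem _ (hedges ▸ hm))
  have hchordNe : s(a, b) ≠ s(u, v) := by
    intro heq
    apply habe
    rw [Walk.edges_cons]
    exact List.mem_cons.mpr (Or.inl (heq.trans Sym2.eq_swap))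
  have hG'ab : G'.Adj a b := by
    rw [hG', deleteEdges_adj]
    exact ⟨hab, by simpa using hchordNe⟩
  have key : ∀ (a b : V) (i j : ℕ), i ≤ j → j ≤ Q.length → Q.getVert i = a →
      Q.getVert j = b → G'.Adj a b → s(a, b) ∉ Q.edges → False := by
    intro a b i j hij hj hia hjb hab' hnot
    rcases Nat.lt_or_ge (i + 1) j with hlt | hge
    · obtain ⟨W1, hW1⟩ := walk_take Q i
      obtain ⟨W2, hW2⟩ := walk_drop Q j
      have hadj' : G'.Adj (Q.getVert i) (Q.getVert j) := by rw [hia, hjb]; exact hab'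
      have hd := dist_le (W1.append (Walk.cons hadj' W2))
      rw [Walk.length_append, Walk.length_cons] at hd
      rw [← hQl] at hd
      have hle1 : W1.length ≤ i := by rw [hW1]; exact Nat.min_le_left _ _
      omega
    · rcases Nat.eq_or_lt_of_le hij with rfl | hlt
      · exact hab'.ne (hia.symm.trans hjb)
      · have hj' : j = i + 1 := by omega
        subst hj'
        exact hnot (by rw [← hia, ← hjb]; exact edge_mem_of_getVert Q i (by omega))
  rcases Nat.le_total i j with hij | hij
  · exact key a b i j hij hj hia hjb hG'ab hchordE
  · exact key b a j i hij hi hjb hia hG'ab.symm (by rw [Sym2.eq_swap]; exact hchordE)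

end AuxProof

/-- If `S` and `T` are not separated by a bridge, then any path from `S` to
`T` with the minimum possible number of edges is non-separating. -/
theorem min_edge_path_nonSeparating
    {V : Type*} [Fintype V] (G : SimpleGraph V)
    (hconn : G.Connected) (hchordal : Chordal G) (S T : V) (hST : S ≠ T)
    (hbr : ∀ e : Sym2 V, G.IsBridge e → (G.deleteEdges {e}).Reachable S T)
    (p : List V) (hp : IsPathSeq G p)
    (hS : p.head? = some S) (hT : p.getLast? = some T)
    (hmin : ∀ q : List V, IsPathSeq G q → q.head? = some S →
      q.getLast? = some T → p.length ≤ q.length) :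
    ¬ SeparatingPath G p := by
  intro hsep
  have hpne := hp.1
  have hlen1 : 0 < p.length := List.length_pos_iff.mpr hpne
  have hS0 : p.get ⟨0, by omega⟩ = S := by
    rcases p with _ | ⟨x, t⟩
    · exact absurd rfl hpne
    · simpa using hS
  have hT0 : p.get ⟨p.length - 1, by omega⟩ = T := by
    rw [List.getLast?_eq_getElem?, List.getElem?_eq_getElem (by omega)] at hT
    simpa using hT
  -- p has no repeated vertices
  have key_nodup : ∀ i j (hi : i < p.length) (hj : j < p.length), i < j →
      p.get ⟨i, hi⟩ = p.get ⟨j, hj⟩ → False := by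
    intro i j hi hj hlt heq
    obtain ⟨q, hq, hqh, hql, hqlen⟩ := glue hp i (j + 1) (by omega) hj hi
      (fun h => by
        rw [show p.get ⟨i, hi⟩ = p.get ⟨j, hj⟩ from heq]
        exact adj_of_pathSeq hp h)
      (fun h => by
        rw [List.getLast?_eq_getElem?, List.getElem?_eq_getElem (by omega)]
        show some (p.get ⟨p.length - 1, by omega⟩) = _
        have hfin : (⟨p.length - 1, by omega⟩ : Fin p.length) = ⟨j, hj⟩ :=
          Fin.ext (show p.length - 1 = j by omega)
        rw [hfin, ← heq])
    have := hmin q hq (by rw [hqh]; exact hS) (by rw [hql]; exact hT)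
    omega
  have hnodup : p.Nodup := by
    rw [List.nodup_iff_injective_get]
    intro a b hab
    by_contra hne
    have hne' : a.1 ≠ b.1 := fun h => hne (Fin.ext h)
    rcases Nat.lt_or_ge a.1 b.1 with h | h
    · exact key_nodup a.1 b.1 a.2 b.2 h hab
    · exact key_nodup b.1 a.1 b.2 a.2 (by omega) hab.symm
  -- p is an induced path
  have hinduced : ∀ i j (hi : i < p.length) (hj : j < p.length), i < j →
      G.Adj (p.get ⟨i, hi⟩) (p.get ⟨j, hj⟩) → j = i + 1 := by
    intro i j hi hj hlt hadj
    by_contra hne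
    have h2 : i + 1 < j := by omega
    obtain ⟨q, hq, hqh, hql, hqlen⟩ := glue hp i j hlt (le_of_lt hj) hi
      (fun h => hadj) (fun h => absurd h (by omega))
    have := hmin q hq (by rw [hqh]; exact hS) (by rw [hql]; exact hT)
    omega
  -- each edge of p occurs at a unique index
  have hedge_idx : ∀ i k (hi : i + 1 < p.length) (hk : k + 1 < p.length),
      s(p.get ⟨i, by omega⟩, p.get ⟨i + 1, hi⟩) =
        s(p.get ⟨k, by omega⟩, p.get ⟨k + 1, hk⟩) → i = k := by
    intro i k hi hk h
    have hinj := List.nodup_iff_injective_get.mp hnodup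
    rcases Sym2.eq_iff.mp h with ⟨h1, h2⟩ | ⟨h1, h2⟩
    · have := hinj h1
      simpa using congrArg Fin.val this
    · have e1 := congrArg Fin.val (hinj h1)
      have e2 := congrArg Fin.val (hinj h2)
      simp at e1 e2
      omega
  -- no edge of p is a bridge
  have hnotbridge : ∀ k (hk : k + 1 < p.length),
      ¬ G.IsBridge s(p.get ⟨k, by omega⟩, p.get ⟨k + 1, hk⟩) := by
    intro k hk hbridge
    have hreachST : (G.deleteEdges {s(p.get ⟨k, by omega⟩, p.get ⟨k + 1, hk⟩)}).Reachable S T :=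
      hbr _ hbridge
    have hnotR : ¬ (G.deleteEdges {s(p.get ⟨k, by omega⟩, p.get ⟨k + 1, hk⟩)}).Reachable
        (p.get ⟨k, by omega⟩) (p.get ⟨k + 1, hk⟩) := isBridge_iff.mp hbridge
    have hoff : ∀ i, i ≠ k → (hi : i + 1 < p.length) →
        (G.deleteEdges {s(p.get ⟨k, by omega⟩, p.get ⟨k + 1, hk⟩)}).Adj
          (p.get ⟨i, by omega⟩) (p.get ⟨i + 1, hi⟩) := by
      intro i hik hi
      rw [deleteEdges_adj]
      refine ⟨adj_of_pathSeq hp hi, ?_⟩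
      intro hmem
      exact hik (hedge_idx i k hi hk (by simpa using hmem))
    have r1 := reach_segment (G.deleteEdges {s(p.get ⟨k, by omega⟩, p.get ⟨k + 1, hk⟩)}) p 0 k
      (by omega) (by omega) (fun i hai hik hi => hoff i (by omega) hi)
    have r2 := reach_segment (G.deleteEdges {s(p.get ⟨k, by omega⟩, p.get ⟨k + 1, hk⟩)}) p
      (k + 1) (p.length - 1) (by omega) (by omega) (fun i hai hik hi => hoff i (by omega) hi)
    rw [show p.get ⟨0, by omega⟩ = S from hS0] at r1
    rw [show p.get ⟨p.length - 1, by omega⟩ = T from hT0] at r2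
    exact hnotR (r1.symm.trans (hreachST.trans r2.symm))
  -- assemble connectivity of the deleted graph
  apply hsep
  have step : ∀ a b : V, G.Adj a b → (G.deleteEdges (edgesOf p)).Reachable a b := by
    intro a b hab
    by_cases hmem : s(a, b) ∈ edgesOf p
    · obtain ⟨k, hk, heq⟩ := hmem
      have hkadj : G.Adj (p.get ⟨k, by omega⟩) (p.get ⟨k + 1, hk⟩) := adj_of_pathSeq hp hk
      obtain ⟨x, hx1, hx2⟩ := exists_common_neighbor hchordal hkadj (hnotbridge k hk)
      have hxnp : x ∉ p := by
        intro hxp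
        obtain ⟨⟨m, hm⟩, hmx⟩ := List.mem_iff_get.mp hxp
        have ha1 : G.Adj (p.get ⟨k, by omega⟩) (p.get ⟨m, hm⟩) := by rw [hmx]; exact hx1
        have ha2 : G.Adj (p.get ⟨m, hm⟩) (p.get ⟨k + 1, hk⟩) := by rw [hmx]; exact hx2
        have c1 : m = k + 1 ∨ k = m + 1 := by
          rcases Nat.lt_trichotomy k m with h | h | h
          · exact Or.inl (hinduced k m (by omega) hm h ha1)
          · exact absurd ha1 (by
              subst h
              exact G.irrefl)
          · exact Or.inr (hinduced m k hm (by omega) h ha1.symm)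
        have c2 : k + 1 = m + 1 ∨ m = k + 2 := by
          rcases Nat.lt_trichotomy m (k + 1) with h | h | h
          · exact Or.inl (hinduced m (k + 1) hm hk h ha2)
          · subst h
            exact absurd ha2 G.irrefl
          · exact Or.inr (hinduced (k + 1) m hk hm h ha2.symm)
        have hmk : m ≠ k := by
          intro h
          subst h
          exact G.irrefl ha1
        omega
      have hnot1 : s(p.get ⟨k, by omega⟩, x) ∉ edgesOf p := fun h =>
        hxnp (mem_of_mem_edgesOf h (Sym2.mem_mk_right _ _))
      have hnot2 : s(x, p.get ⟨k + 1, hk⟩) ∉ edgesOf p := fun h =>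
        hxnp (mem_of_mem_edgesOf h (Sym2.mem_mk_left _ _))
      have r1 : (G.deleteEdges (edgesOf p)).Adj (p.get ⟨k, by omega⟩) x :=
        deleteEdges_adj.mpr ⟨hx1, hnot1⟩
      have r2 : (G.deleteEdges (edgesOf p)).Adj x (p.get ⟨k + 1, hk⟩) :=
        deleteEdges_adj.mpr ⟨hx2, hnot2⟩
      have hr := r1.reachable.trans r2.reachable
      rcases Sym2.eq_iff.mp heq with ⟨h1, h2⟩ | ⟨h1, h2⟩
      · rw [h1, h2]; exact hr
      · rw [h1, h2]; exact hr.symm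
    · exact (deleteEdges_adj.mpr ⟨hab, hmem⟩).reachable
  refine (connected_iff _).mpr ⟨?_, hconn.nonempty⟩
  intro a b
  obtain ⟨W⟩ := hconn.preconnected a b
  induction W with
  | nil => exact Reachable.refl _
  | cons h q ih => exact (step _ _ h).trans ih


end NSP
end

section
/- If D is a minimal separating set of edges of G (D is separating but no proper subset of D is separating), then the graph obtained from G by deleting the edges of D has exactly two connected components, and the subgraph of G formed by the edges of D together with their endpoints is connected. -/
open SimpleGraph

namespace NSP

variable {V : Type*}

section AuxProofs

open SimpleGraph Walk

variable {G : SimpleGraph V} {D : Set (Sym2 V)}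

private lemma mapSpanning_coe {G G' : SimpleGraph V} (h : G ≤ G') :
    ⇑(Hom.ofLE h) = id := rfl

private lemma mapLe_support' {G G' : SimpleGraph V} (h : G ≤ G') {u v : V} (p : G.Walk u v) :
    (p.mapLe h).support = p.support := by
  simp [Walk.mapLe, Walk.support_map, mapSpanning_coe]

private lemma mapLe_edges' {G G' : SimpleGraph V} (h : G ≤ G') {u v : V} (p : G.Walk u v) :
    (p.mapLe h).edges = p.edges := by
  simp [Walk.mapLe, Walk.edges_map, mapSpanning_coe, Sym2.map_id]

private lemma mapLe_length' {G G' : SimpleGraph V} (h : G ≤ G') {u v : V} (p : G.Walk u v) :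
    (p.mapLe h).length = p.length := Walk.length_map _ _

private lemma sides_of_walk {u v : V} (huv : s(u, v) ∈ D) :
    ∀ {x y : V}, (G.deleteEdges (D \ {s(u, v)})).Walk x y →
      ((G.deleteEdges D).Reachable x u ∨ (G.deleteEdges D).Reachable x v) →
      (G.deleteEdges D).Reachable y u ∨ (G.deleteEdges D).Reachable y v := by
  intro x y p
  induction p with
  | nil => exact id
  | @cons a c y h q ih =>
    intro hx
    apply ih
    rw [deleteEdges_adj] at h
    by_cases hD : s(a, c) ∈ D
    · have heq : s(a, c) = s(u, v) := by
        by_contra hne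
        exact h.2 ⟨hD, hne⟩
      rw [Sym2.eq_iff] at heq
      rcases heq with ⟨rfl, rfl⟩ | ⟨rfl, rfl⟩
      · right; exact Reachable.refl _
      · left; exact Reachable.refl _
    · have hH : (G.deleteEdges D).Adj a c := deleteEdges_adj.mpr ⟨h.1, hD⟩
      rcases hx with h1 | h1
      · left; exact hH.symm.reachable.trans h1
      · right; exact hH.symm.reachable.trans h1

private lemma minConn (hmin : ∀ D' ⊂ D, ¬ Separating G D') {u v : V} (huv : s(u, v) ∈ D) :
    (G.deleteEdges (D \ {s(u, v)})).Connected := by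
  have hss : D \ {s(u, v)} ⊂ D := by
    constructor
    · exact Set.diff_subset
    · intro hsub
      exact (hsub huv).2 rfl
  exact not_not.mp (hmin _ hss)

private lemma side_cover (hmin : ∀ D' ⊂ D, ¬ Separating G D') {u v : V}
    (huv : s(u, v) ∈ D) (x : V) :
    (G.deleteEdges D).Reachable x u ∨ (G.deleteEdges D).Reachable x v := by
  obtain ⟨p⟩ := (minConn hmin huv).preconnected u x
  exact sides_of_walk huv p (Or.inl (Reachable.refl u))

private lemma cross_not_reach (hsep : Separating G D)
    (hmin : ∀ D' ⊂ D, ¬ Separating G D') {u v : V} (huv : s(u, v) ∈ D) :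
    ¬ (G.deleteEdges D).Reachable u v := by
  intro hr
  apply hsep
  have hconn' := minConn hmin huv
  rw [connected_iff] at hconn' ⊢
  refine ⟨fun x y => ?_, hconn'.2⟩
  obtain ⟨p⟩ := hconn'.1 x y
  induction p with
  | nil => exact Reachable.refl _
  | @cons a c y h q ih =>
    refine Reachable.trans ?_ ih
    rw [deleteEdges_adj] at h
    by_cases hD : s(a, c) ∈ D
    · have heq : s(a, c) = s(u, v) := by
        by_contra hne
        exact h.2 ⟨hD, hne⟩
      rw [Sym2.eq_iff] at heq
      rcases heq with ⟨rfl, rfl⟩ | ⟨rfl, rfl⟩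
      · exact hr
      · exact hr.symm
    · exact (deleteEdges_adj.mpr ⟨h.1, hD⟩).reachable

private lemma surgery {G : SimpleGraph V} [DecidableEq V] {a b : V} (P : G.Walk a b) :
    P.IsPath → ∀ u w : V, G.Adj u w → u ∈ P.support → w ∈ P.support → s(u, w) ∉ P.edges →
    ∃ P' : G.Walk a b, P'.IsPath ∧ P'.length < P.length ∧ ∀ x ∈ P'.support, x ∈ P.support := by
  induction P with
  | nil =>
    intro _ u w huw hu hw _
    rw [Walk.support_nil, List.mem_singleton] at hu hw
    subst hu; subst hw
    exact absurd rfl huw.ne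
  | @cons a c b h q ih =>
    intro hP u w huw hu hw hne
    rw [Walk.support_cons, List.mem_cons] at hu hw
    rw [Walk.edges_cons, List.mem_cons] at hne
    push_neg at hne
    obtain ⟨hne1, hne2⟩ := hne
    have hq : q.IsPath := hP.of_cons
    have hna : a ∉ q.support := ((Walk.cons_isPath_iff h q).mp hP).2
    rcases hu with rfl | hu
    · have hwq : w ∈ q.support := by
        rcases hw with rfl | hw
        · exact absurd rfl huw.ne
        · exact hw
      have hcw : c ≠ w := by
        rintro rfl
        exact hne1 rfl
      refine ⟨Walk.cons huw (q.dropUntil w hwq), ?_, ?_, ?_⟩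
      · rw [Walk.cons_isPath_iff]
        exact ⟨hq.dropUntil hwq, fun hmem => hna (q.support_dropUntil_subset hwq hmem)⟩
      · rw [Walk.length_cons, Walk.length_cons]
        have hsp := congrArg Walk.length (q.take_spec hwq)
        rw [Walk.length_append] at hsp
        have h0 : (q.takeUntil w hwq).length ≠ 0 := fun h0 => hcw (Walk.eq_of_length_eq_zero h0)
        omega
      · intro x hx
        rw [Walk.support_cons, List.mem_cons] at hx ⊢
        rcases hx with rfl | hx
        · exact Or.inl rfl
        · exact Or.inr (q.support_dropUntil_subset hwq hx)
    · rcases hw with rfl | hw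
      · have hcu : c ≠ u := by
          rintro rfl
          exact hne1 Sym2.eq_swap
        refine ⟨Walk.cons huw.symm (q.dropUntil u hu), ?_, ?_, ?_⟩
        · rw [Walk.cons_isPath_iff]
          exact ⟨hq.dropUntil hu, fun hmem => hna (q.support_dropUntil_subset hu hmem)⟩
        · rw [Walk.length_cons, Walk.length_cons]
          have hsp := congrArg Walk.length (q.take_spec hu)
          rw [Walk.length_append] at hsp
          have h0 : (q.takeUntil u hu).length ≠ 0 := fun h0 => hcu (Walk.eq_of_length_eq_zero h0)
          omega
        · intro x hx
          rw [Walk.support_cons, List.mem_cons] at hx ⊢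
          rcases hx with rfl | hx
          · exact Or.inl rfl
          · exact Or.inr (q.support_dropUntil_subset hu hx)
      · obtain ⟨q', hq', hlt, hsub⟩ := ih hq u w huw hu hw hne2
        refine ⟨Walk.cons h q', ?_, ?_, ?_⟩
        · rw [Walk.cons_isPath_iff]
          exact ⟨hq', fun hm => hna (hsub _ hm)⟩
        · rw [Walk.length_cons, Walk.length_cons]; omega
        · intro x hx
          rw [Walk.support_cons, List.mem_cons] at hx ⊢
          rcases hx with rfl | hx
          · exact Or.inl rfl
          · exact Or.inr (hsub _ hx)

private lemma main_lemma (hchordal : Chordal G) (hsep : Separating G D)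
    (hmin : ∀ D' ⊂ D, ¬ Separating G D') (hDE : D ⊆ G.edgeSet) :
    ∀ n : ℕ, ∀ a1 b1 a2 b2 : V, s(a1, b1) ∈ D → s(a2, b2) ∈ D →
      ∀ (P : (G.deleteEdges D).Walk a1 a2) (Q : (G.deleteEdges D).Walk b2 b1),
        P.IsPath → Q.IsPath → P.length + Q.length ≤ n →
        Relation.ReflTransGen (fun x y => s(x, y) ∈ D) a1 a2 := by
  classical
  intro n
  induction n using Nat.strong_induction_on with
  | _ n ih =>
  intro a1 b1 a2 b2 he1 he2 P Q hP hQ hlen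
  by_cases ha : a1 = a2
  · subst ha; exact Relation.ReflTransGen.refl
  by_cases hb : b1 = b2
  · subst hb
    refine Relation.ReflTransGen.head he1 (Relation.ReflTransGen.single ?_)
    show s(b1, a2) ∈ D
    rwa [Sym2.eq_swap]
  have hA : ∀ x ∈ P.support, (G.deleteEdges D).Reachable x a1 :=
    fun x hx => ⟨(P.takeUntil x hx).reverse⟩
  have hB : ∀ x ∈ Q.support, (G.deleteEdges D).Reachable x b1 :=
    fun x hx => ⟨Q.dropUntil x hx⟩
  have hnr : ¬ (G.deleteEdges D).Reachable a1 b1 := cross_not_reach hsep hmin he1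
  have hdisj : ∀ x, x ∈ P.support → x ∈ Q.support → False := fun x h1 h2 =>
    hnr ((hA x h1).symm.trans (hB x h2))
  have hle : G.deleteEdges D ≤ G := deleteEdges_le D
  have hadj2 : G.Adj a2 b2 := (G.mem_edgeSet).mp (hDE he2)
  have hadj1 : G.Adj b1 a1 := ((G.mem_edgeSet).mp (hDE he1)).symm
  set c : G.Walk a1 a1 :=
    (P.mapLe hle).append
      (Walk.cons hadj2 ((Q.mapLe hle).append (Walk.cons hadj1 Walk.nil))) with hc
  have hsupc : c.support = P.support ++ (Q.support ++ [a1]) := by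
    rw [hc]
    simp only [Walk.support_append, Walk.support_cons, List.tail_cons, Walk.support_nil,
      mapLe_support']
  have hedgc : c.edges = P.edges ++ (s(a2, b2) :: (Q.edges ++ [s(b1, a1)])) := by
    rw [hc]
    simp only [Walk.edges_append, Walk.edges_cons, Walk.edges_nil, mapLe_edges']
  have hlenc : c.length = P.length + Q.length + 2 := by
    rw [hc]
    simp only [Walk.length_append, Walk.length_cons, Walk.length_nil, mapLe_length']
    omega
  have hP1 : P.length ≠ 0 := fun h0 => ha (Walk.eq_of_length_eq_zero h0)
  have hQ1 : Q.length ≠ 0 := fun h0 => hb (Walk.eq_of_length_eq_zero h0).symm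
  have ha1P : a1 ∈ P.support := P.start_mem_support
  have ha2P : a2 ∈ P.support := P.end_mem_support
  have hb1Q : b1 ∈ Q.support := Q.end_mem_support
  have hb2Q : b2 ∈ Q.support := Q.start_mem_support
  have hePQ : ∀ e, e ∈ P.edges → e ∈ Q.edges → False := by
    intro e h1 h2
    induction e using Sym2.ind with
    | _ x y => exact hdisj x (P.fst_mem_support_of_mem_edges h1) (Q.fst_mem_support_of_mem_edges h2)
  have hab2P : s(a2, b2) ∉ P.edges := fun h => hdisj b2 (P.snd_mem_support_of_mem_edges h) hb2Q
  have hab2Q : s(a2, b2) ∉ Q.edges := fun h => hdisj a2 ha2P (Q.fst_mem_support_of_mem_edges h)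
  have hb1a1P : s(b1, a1) ∉ P.edges := fun h => hdisj b1 (P.fst_mem_support_of_mem_edges h) hb1Q
  have hb1a1Q : s(b1, a1) ∉ Q.edges := fun h => hdisj a1 ha1P (Q.snd_mem_support_of_mem_edges h)
  have hneq : s(a2, b2) ≠ s(b1, a1) := by
    intro heq
    rcases Sym2.eq_iff.mp heq with ⟨h1, h2⟩ | ⟨h1, h2⟩
    · exact hdisj a2 ha2P (by rw [h1]; exact hb1Q)
    · exact ha h1.symm
  have hcyc : c.IsCycle := by
    refine ⟨⟨⟨?_⟩, ?_⟩, ?_⟩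
    · rw [hedgc]
      refine List.Nodup.append hP.edges_nodup ?_ ?_
      · rw [List.nodup_cons]
        constructor
        · intro hmem
          rw [List.mem_append, List.mem_singleton] at hmem
          rcases hmem with h | h
          · exact hab2Q h
          · exact hneq h
        · refine List.Nodup.append hQ.edges_nodup (List.nodup_singleton _) ?_
          intro e he1' he2'
          rw [List.mem_singleton] at he2'
          subst he2'
          exact hb1a1Q he1'
      · intro e heP heR
        rw [List.mem_cons, List.mem_append, List.mem_singleton] at heR
        rcases heR with rfl | h | rfl
        · exact hab2P heP
        · exact hePQ e heP h
        · exact hb1a1P heP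
    · intro hnil
      rw [hnil, Walk.length_nil] at hlenc
      omega
    · obtain ⟨t, ht⟩ : ∃ t, P.support = a1 :: t := ⟨_, P.support_eq_cons⟩
      have htail : c.support.tail = t ++ (Q.support ++ [a1]) := by
        rw [hsupc, ht]; rfl
      rw [htail]
      have htnd : t.Nodup ∧ a1 ∉ t := by
        have hnd := hP.support_nodup
        rw [ht, List.nodup_cons] at hnd
        exact ⟨hnd.2, hnd.1⟩
      refine List.Nodup.append htnd.1 ?_ ?_
      · refine List.Nodup.append hQ.support_nodup (List.nodup_singleton _) ?_
        intro x hx1 hx2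
        rw [List.mem_singleton] at hx2
        subst hx2
        exact hdisj x ha1P hx1
      · intro x hx1 hx2
        have hxP : x ∈ P.support := by rw [ht]; exact List.mem_cons_of_mem _ hx1
        rw [List.mem_append, List.mem_singleton] at hx2
        rcases hx2 with hmem | rfl
        · exact hdisj x hxP hmem
        · exact htnd.2 hx1
  have hm1 : s(b1, a1) ∈ c.edges := by rw [hedgc]; simp
  have hm2 : s(a2, b2) ∈ c.edges := by rw [hedgc]; simp
  have key : ∀ x y : V, x ∈ P.support → y ∈ Q.support → G.Adj x y → s(x, y) ∉ c.edges →
      Relation.ReflTransGen (fun x y => s(x, y) ∈ D) a1 a2 := by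
    intro x y hxP hyQ hxy hnce
    have hD : s(x, y) ∈ D := by
      by_contra hnD
      exact hnr ((hA x hxP).symm.trans
        ((deleteEdges_adj.mpr ⟨hxy, hnD⟩).reachable.trans (hB y hyQ)))
    have hPsplit : (P.takeUntil x hxP).length + (P.dropUntil x hxP).length = P.length := by
      rw [← Walk.length_append, P.take_spec hxP]
    have hQsplit : (Q.takeUntil y hyQ).length + (Q.dropUntil y hyQ).length = Q.length := by
      rw [← Walk.length_append, Q.take_spec hyQ]
    have hx1 : 0 < (P.takeUntil x hxP).length + (Q.dropUntil y hyQ).length := by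
      refine Nat.pos_of_ne_zero fun h0 => ?_
      have h1 : a1 = x := Walk.eq_of_length_eq_zero (p := P.takeUntil x hxP) (by omega)
      have h2 : y = b1 := Walk.eq_of_length_eq_zero (p := Q.dropUntil y hyQ) (by omega)
      apply hnce
      rw [← h1, h2, Sym2.eq_swap]
      exact hm1
    have hx2 : 0 < (P.dropUntil x hxP).length + (Q.takeUntil y hyQ).length := by
      refine Nat.pos_of_ne_zero fun h0 => ?_
      have h1 : x = a2 := Walk.eq_of_length_eq_zero (p := P.dropUntil x hxP) (by omega)
      have h2 : b2 = y := Walk.eq_of_length_eq_zero (p := Q.takeUntil y hyQ) (by omega)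
      apply hnce
      rw [h1, ← h2]
      exact hm2
    have hr1 : Relation.ReflTransGen (fun x y => s(x, y) ∈ D) a1 x :=
      ih ((P.takeUntil x hxP).length + (Q.dropUntil y hyQ).length) (by omega)
        a1 b1 x y he1 hD (P.takeUntil x hxP) (Q.dropUntil y hyQ)
        (hP.takeUntil hxP) (hQ.dropUntil hyQ) le_rfl
    have hr2 : Relation.ReflTransGen (fun x y => s(x, y) ∈ D) x a2 :=
      ih ((P.dropUntil x hxP).length + (Q.takeUntil y hyQ).length) (by omega)
        x y a2 b2 hD he2 (P.dropUntil x hxP) (Q.takeUntil y hyQ)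
        (hP.dropUntil hxP) (hQ.takeUntil hyQ) le_rfl
    exact hr1.trans hr2
  obtain ⟨u, w, hu, hw, huw, hnc⟩ := hchordal c hcyc (by omega)
  have hmem : ∀ x, x ∈ c.support → x ∈ P.support ∨ x ∈ Q.support := by
    intro x hx
    rw [hsupc, List.mem_append, List.mem_append, List.mem_singleton] at hx
    rcases hx with h | h | rfl
    · exact Or.inl h
    · exact Or.inr h
    · exact Or.inl ha1P
  rcases hmem u hu with huP | huQ <;> rcases hmem w hw with hwP | hwQ
  · -- both in P
    have hnD : s(u, w) ∉ D := fun h =>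
      cross_not_reach hsep hmin h ((hA u huP).trans (hA w hwP).symm)
    have hHadj : (G.deleteEdges D).Adj u w := deleteEdges_adj.mpr ⟨huw, hnD⟩
    have hnP : s(u, w) ∉ P.edges := fun h =>
      hnc (by rw [hedgc]; exact List.mem_append_left _ h)
    obtain ⟨P', hP', hlt, _⟩ := surgery P hP u w hHadj huP hwP hnP
    exact ih (P'.length + Q.length) (by omega) a1 b1 a2 b2 he1 he2 P' Q hP' hQ le_rfl
  · exact key u w huP hwQ huw hnc
  · refine key w u hwP huQ huw.symm ?_
    rw [Sym2.eq_swap]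
    exact hnc
  · -- both in Q
    have hnD : s(u, w) ∉ D := fun h =>
      cross_not_reach hsep hmin h ((hB u huQ).trans (hB w hwQ).symm)
    have hHadj : (G.deleteEdges D).Adj u w := deleteEdges_adj.mpr ⟨huw, hnD⟩
    have hnQ : s(u, w) ∉ Q.edges := fun h =>
      hnc (by
        rw [hedgc]
        exact List.mem_append_right _ (List.mem_cons_of_mem _ (List.mem_append_left _ h)))
    obtain ⟨Q', hQ', hlt, _⟩ := surgery Q hQ u w hHadj huQ hwQ hnQ
    exact ih (P.length + Q'.length) (by omega) a1 b1 a2 b2 he1 he2 P Q' hP hQ' le_rfl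

private lemma rtg_reach (hDE : D ⊆ G.edgeSet) :
    ∀ {x y : V}, Relation.ReflTransGen (fun a b => s(a, b) ∈ D) x y →
      ∀ (hx : x ∈ (edgeSubgraph G D).verts) (hy : y ∈ (edgeSubgraph G D).verts),
        (edgeSubgraph G D).coe.Reachable ⟨x, hx⟩ ⟨y, hy⟩ := by
  intro x y h
  induction h with
  | refl => intro hx hy; exact Reachable.refl _
  | @tail b z hxb hbz ih =>
    intro hx hz
    have hbv : b ∈ (edgeSubgraph G D).verts := show ∃ e ∈ D ∩ G.edgeSet, b ∈ e from ⟨s(b, z), ⟨hbz, hDE hbz⟩, Sym2.mem_mk_left _ _⟩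
    refine (ih hx hbv).trans (Adj.reachable ?_)
    exact show s(b, z) ∈ D ∧ G.Adj b z from ⟨hbz, (G.mem_edgeSet).mp (hDE hbz)⟩

end AuxProofs

/-- A minimal separating set of edges `D` leaves exactly two connected
components after deletion, and the subgraph formed by `D` together with the
endpoints of its edges is connected. -/
theorem minimal_separating_set_two_components_and_connected
    {V : Type*} [Fintype V] (G : SimpleGraph V)
    (hconn : G.Connected) (hchordal : Chordal G)
    (D : Set (Sym2 V)) (hDE : D ⊆ G.edgeSet)
    (hsep : Separating G D) (hmin : ∀ D' ⊂ D, ¬ Separating G D') :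
    (∃ c₁ c₂ : (G.deleteEdges D).ConnectedComponent, c₁ ≠ c₂ ∧
      ∀ c : (G.deleteEdges D).ConnectedComponent, c = c₁ ∨ c = c₂) ∧
    (edgeSubgraph G D).Connected := by
  classical
  have hDne : D.Nonempty := by
    rcases Set.eq_empty_or_nonempty D with rfl | h
    · exact absurd (by rw [deleteEdges_empty]; exact hconn) hsep
    · exact h
  obtain ⟨u, v, huv⟩ : ∃ u v, s(u, v) ∈ D := by
    obtain ⟨e, he⟩ := hDne
    exact Sym2.exists.mp ⟨e, he⟩
  have hnruv : ¬ (G.deleteEdges D).Reachable u v := cross_not_reach hsep hmin huv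
  constructor
  · refine ⟨(G.deleteEdges D).connectedComponentMk u,
      (G.deleteEdges D).connectedComponentMk v, ?_, ?_⟩
    · intro h
      exact hnruv (ConnectedComponent.eq.mp h)
    · intro c
      refine ConnectedComponent.ind (fun x => ?_) c
      rcases side_cover hmin huv x with h | h
      · exact Or.inl (ConnectedComponent.sound h)
      · exact Or.inr (ConnectedComponent.sound h)
  · rw [Subgraph.connected_iff]
    refine ⟨?_, ⟨u, show ∃ e ∈ D ∩ G.edgeSet, u ∈ e from ⟨s(u, v), ⟨huv, hDE huv⟩, Sym2.mem_mk_left _ _⟩⟩⟩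
    constructor
    rintro ⟨x, hx⟩ ⟨y, hy⟩
    have hRsymm : Symmetric (fun a b : V => s(a, b) ∈ D) := fun a b h => show s(b, a) ∈ D by rwa [Sym2.eq_swap]
    have hconnu : ∀ z, z ∈ (edgeSubgraph G D).verts →
        Relation.ReflTransGen (fun a b => s(a, b) ∈ D) z u := by
      intro z hz
      obtain ⟨e, ⟨heD, _⟩, hze⟩ := (show ∃ e ∈ D ∩ G.edgeSet, z ∈ e from hz)
      obtain ⟨w', rfl⟩ := Sym2.mem_iff_exists.mp hze
      rcases side_cover hmin huv z with hzu | hzv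
      · rcases side_cover hmin huv w' with hwu | hwv
        · exact absurd (hzu.trans hwu.symm) (cross_not_reach hsep hmin heD)
        · obtain ⟨P0⟩ := hzu.symm
          obtain ⟨Q0⟩ := hwv
          have hr := main_lemma hchordal hsep hmin hDE
            ((P0.toPath : (G.deleteEdges D).Walk u z).length +
              (Q0.toPath : (G.deleteEdges D).Walk w' v).length)
            u v z w' huv heD P0.toPath Q0.toPath P0.toPath.2 Q0.toPath.2 le_rfl
          exact (letI : Std.Symm (fun a b : V => s(a, b) ∈ D) := ⟨fun _ _ h => hRsymm h⟩; Std.Symm.symm _ _) hr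
      · rcases side_cover hmin huv w' with hwu | hwv
        · obtain ⟨P0⟩ := hwu.symm
          obtain ⟨Q0⟩ := hzv
          have heD' : s(w', z) ∈ D := by rwa [Sym2.eq_swap]
          have hr := main_lemma hchordal hsep hmin hDE
            ((P0.toPath : (G.deleteEdges D).Walk u w').length +
              (Q0.toPath : (G.deleteEdges D).Walk z v).length)
            u v w' z huv heD' P0.toPath Q0.toPath P0.toPath.2 Q0.toPath.2 le_rfl
          exact (Relation.ReflTransGen.single heD).trans
            ((letI : Std.Symm (fun a b : V => s(a, b) ∈ D) := ⟨fun _ _ h => hRsymm h⟩; Std.Symm.symm _ _) hr)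
        · exact absurd (hzv.trans hwv.symm) (cross_not_reach hsep hmin heD)
    have hxy : Relation.ReflTransGen (fun a b => s(a, b) ∈ D) x y :=
      (hconnu x hx).trans ((letI : Std.Symm (fun a b : V => s(a, b) ∈ D) := ⟨fun _ _ h => hRsymm h⟩; Std.Symm.symm _ _) (hconnu y hy))
    exact rtg_reach hDE hxy hx hy

end NSP
end

section
/- Let r be a separator path in G. For every index i with 0 ≤ i < |r|−2, the vertices r_i and r_{i+2} are adjacent in G. -/
open SimpleGraph

namespace NSP

variable {V : Type*}

section Lemmas

variable {G : SimpleGraph V}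

lemma length_zero_eq {u v : V} (p : G.Walk u v) (h : p.length = 0) : u = v := by
  cases p with
  | nil => rfl
  | cons h q => simp at h

lemma adj_of_length_one_s4 {u v : V} (p : G.Walk u v) (h : p.length = 1) : G.Adj u v := by
  cases p with
  | nil => simp at h
  | cons ha q =>
    simp only [Walk.length_cons] at h
    exact (length_zero_eq q (by omega)) ▸ ha

lemma edge_of_length_one {u v : V} (p : G.Walk u v) (h : p.length = 1) :
    s(u, v) ∈ p.edges := by
  cases p with
  | nil => simp at h
  | cons ha q =>
    simp only [Walk.length_cons] at h
    cases length_zero_eq q (by omega)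
    simp

lemma reach_of_mem_support' {u v z : V} (p : G.Walk u v) (hz : z ∈ p.support) :
    G.Reachable u z := by
  classical
  exact ⟨p.takeUntil z hz⟩

lemma exists_path_support {H : SimpleGraph V} (hle : H ≤ G) {x y : V} (h : H.Reachable x y) :
    ∃ q : G.Walk x y, q.IsPath ∧ ∀ z ∈ q.support, H.Reachable x z := by
  classical
  obtain ⟨w⟩ := h
  have hsub : ∀ e ∈ w.bypass.edges, e ∈ G.edgeSet := fun e he =>
    (edgeSet_mono hle) (w.bypass.edges_subset_edgeSet he)
  refine ⟨(w.bypass).transfer G hsub, (w.bypass_isPath).transfer hsub, ?_⟩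
  intro z hz
  rw [Walk.support_transfer] at hz
  exact reach_of_mem_support' w.bypass hz

lemma dichotomy_of_connected {D S : Set (Sym2 V)} {x y : V}
    (hS : (G.deleteEdges S).Connected)
    (hkey : ∀ e ∈ D, e ∉ S → e = s(x, y)) (v : V) :
    (G.deleteEdges D).Reachable v x ∨ (G.deleteEdges D).Reachable v y := by
  obtain ⟨W⟩ := hS.preconnected v x
  induction W with
  | nil => exact Or.inl (Reachable.refl _)
  | @cons a b c h W ih =>
    by_cases hD : s(a, b) ∈ D
    · have heq := hkey _ hD (deleteEdges_adj.1 h).2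
      rcases Sym2.eq_iff.1 heq with ⟨rfl, rfl⟩ | ⟨rfl, rfl⟩
      · exact Or.inl (Reachable.refl _)
      · exact Or.inr (Reachable.refl _)
    · have hadj : (G.deleteEdges D).Adj a b :=
        deleteEdges_adj.2 ⟨(deleteEdges_adj.1 h).1, hD⟩
      rcases ih hkey with h1 | h1
      · exact Or.inl (hadj.reachable.trans h1)
      · exact Or.inr (hadj.reachable.trans h1)

lemma walkSeg (r : List V) (hch : r.Chain' G.Adj) (hnd : r.Nodup) (u : ℕ) :
    ∀ (v : ℕ) (huv : u ≤ v) (hv : v < r.length),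
    ∃ P : G.Walk (r.get ⟨u, by omega⟩) (r.get ⟨v, hv⟩),
      P.IsPath ∧ P.length = v - u ∧
      ∀ z ∈ P.support, ∃ (s : ℕ) (hs : s < r.length), u ≤ s ∧ s ≤ v ∧ z = r.get ⟨s, hs⟩ := by
  have hadj : ∀ k (hk : k + 1 < r.length),
      G.Adj (r.get ⟨k, by omega⟩) (r.get ⟨k + 1, hk⟩) := by
    intro k hk
    exact List.isChain_iff_getElem.1 hch k (by omega)
  intro v huv
  induction v, huv using Nat.le_induction with
  | base =>
    intro hv
    exact ⟨Walk.nil, Walk.IsPath.nil, by simp, by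
      intro z hz
      simp only [Walk.support_nil, List.mem_singleton] at hz
      exact ⟨u, hv, le_refl _, le_refl _, hz⟩⟩
  | succ v huv ih =>
    intro hv
    obtain ⟨P, hP, hlen, hsupp⟩ := ih (by omega)
    refine ⟨P.concat (hadj v hv), ?_, ?_, ?_⟩
    · rw [Walk.isPath_def, Walk.support_concat]
      rw [List.nodup_append]
      refine ⟨hP.support_nodup, List.nodup_singleton _, ?_⟩
      intro z hz z' hz' hzz'
      simp only [List.mem_singleton] at hz'
      subst hz'
      subst hzz'
      obtain ⟨s, hs, hus, hsv, hzs⟩ := hsupp _ hz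
      have := (hnd.get_inj_iff.1 hzs.symm)
      have : s = v + 1 := by simpa [Fin.ext_iff] using this
      omega
    · rw [Walk.length_concat]; omega
    · intro z hz
      rw [Walk.support_concat] at hz
      rcases List.mem_append.1 hz with hz | hz
      · obtain ⟨s, hs, hus, hsv, hzs⟩ := hsupp _ hz
        exact ⟨s, hs, hus, by omega, hzs⟩
      · simp only [List.mem_singleton] at hz
        exact ⟨v + 1, hv, by omega, le_refl _, hz⟩

variable [DecidableEq V]

lemma eq_of_mem_take_drop {u v w z : V} {p : G.Walk u v} (hp : p.IsPath)
    (hw : w ∈ p.support) (h1 : z ∈ (p.takeUntil w hw).support)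
    (h2 : z ∈ (p.dropUntil w hw).support) : z = w := by
  have hs : p.support = (p.takeUntil w hw).support ++ (p.dropUntil w hw).support.tail := by
    rw [← Walk.support_append, Walk.take_spec]
  have hnd := hp.support_nodup
  rw [hs] at hnd
  have hdisj := List.disjoint_of_nodup_append hnd
  rw [(p.dropUntil w hw).support_eq_cons, List.mem_cons] at h2
  rcases h2 with rfl | ht
  · rfl
  · exact absurd h1 (fun hh => hdisj hh ht)

lemma length_take_add_drop {u v w : V} (p : G.Walk u v) (hw : w ∈ p.support) :
    (p.takeUntil w hw).length + (p.dropUntil w hw).length = p.length := by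
  conv_rhs => rw [← Walk.take_spec p hw]
  rw [Walk.length_append]

/-- Shortcut lemma: a path with a chord can be strictly shortened. -/
lemma shortcut_s4 {x y u w : V} (p : G.Walk x y) (hp : p.IsPath) (hu : u ∈ p.support)
    (hw : w ∈ p.support) (ha : G.Adj u w) (he : s(u, w) ∉ p.edges) :
    ∃ q : G.Walk x y, q.IsPath ∧ q.length < p.length ∧ ∀ z ∈ q.support, z ∈ p.support := by
  induction p with
  | nil =>
    simp only [Walk.support_nil, List.mem_singleton] at hu hw
    exact absurd (hu ▸ hw ▸ rfl) ha.ne'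
  | @cons x x' y hxx' p' ih =>
    have key : ∀ {u w : V}, G.Adj u w → s(u, w) ∉ (Walk.cons hxx' p').edges → u = x →
        (hw : w ∈ (Walk.cons hxx' p').support) →
        ∃ q : G.Walk x y, q.IsPath ∧ q.length < (Walk.cons hxx' p').length ∧
          ∀ z ∈ q.support, z ∈ (Walk.cons hxx' p').support := by
      rintro u w ha he rfl hw
      set P := Walk.cons hxx' p' with hP
      have hwx : w ≠ u := ha.ne'
      refine ⟨Walk.cons ha (P.dropUntil w hw), ?_, ?_, ?_⟩
      · rw [Walk.cons_isPath_iff]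
        refine ⟨hp.dropUntil hw, fun hmem => ?_⟩
        have : u ∈ (P.takeUntil w hw).support := (P.takeUntil w hw).start_mem_support
        exact hwx (eq_of_mem_take_drop hp hw this hmem).symm
      · have hlen := length_take_add_drop P hw
        have h2 : 2 ≤ (P.takeUntil w hw).length := by
          rcases Nat.lt_or_ge (P.takeUntil w hw).length 2 with hl | hl
          · interval_cases hle : (P.takeUntil w hw).length
            · exact absurd (length_zero_eq _ hle).symm hwx
            · exact absurd (Walk.edges_takeUntil_subset P hw (edge_of_length_one _ hle)) he
          · exact hl
        simp only [Walk.length_cons]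
        omega
      · intro z hz
        simp only [Walk.support_cons, List.mem_cons] at hz ⊢
        rcases hz with rfl | hz
        · simp
        · exact Walk.support_dropUntil_subset P hw hz
    by_cases hux : u = x
    · exact key ha he hux hw
    by_cases hwx : w = x
    · exact key ha.symm (by rwa [Sym2.eq_swap]) hwx hu
    · have hu' : u ∈ p'.support := by
        simp only [Walk.support_cons, List.mem_cons] at hu; tauto
      have hw' : w ∈ p'.support := by
        simp only [Walk.support_cons, List.mem_cons] at hw; tauto
      have he' : s(u, w) ∉ p'.edges := fun hh => he (by simp [hh])
      obtain ⟨q', hq'p, hq'l, hq's⟩ := ih hp.of_cons hu' hw' he'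
      refine ⟨Walk.cons hxx' q', ?_, by simpa using hq'l, ?_⟩
      · rw [Walk.cons_isPath_iff]
        exact ⟨hq'p, fun hmem => ((Walk.cons_isPath_iff _ _).1 hp).2 (hq's _ hmem)⟩
      · intro z hz
        simp only [Walk.support_cons, List.mem_cons] at hz ⊢
        rcases hz with rfl | hz
        · left; rfl
        · right; exact hq's _ hz

end Lemmas

def idx (r : List V) (k : ℕ) (hk : k < r.length) : V := r.get ⟨k, hk⟩

/-- For a separator path `r` and `0 ≤ i < |r| - 2`, the vertices `r_i` and
`r_{i+2}` are adjacent. -/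

theorem separatorPath_adjacent
    {V : Type*} [Fintype V] (G : SimpleGraph V)
    (hconn : G.Connected) (hchordal : Chordal G)
    (hnb : ∀ e : Sym2 V, ¬ G.IsBridge e)
    (r : List V) (hr : SeparatorPath G r)
    (i : ℕ) (h : i + 2 < r.length) :
    G.Adj (r.get ⟨i, by omega⟩) (r.get ⟨i + 2, h⟩) := by
  classical
  obtain ⟨⟨⟨hne, hch⟩, hnd⟩, hsep, hmin⟩ := hr
  have hn3 : 3 ≤ r.length := by omega
  have hadj : ∀ k (hk : k + 1 < r.length),
      G.Adj (idx r k (by omega)) (idx r (k + 1) hk) := by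
    intro k hk
    exact List.isChain_iff_getElem.1 hch k (by omega)
  have hinj : ∀ k l (hk : k < r.length) (hl : l < r.length),
      idx r k hk = idx r l hl → k = l := by
    intro k l hk hl hkl
    have := hnd.get_inj_iff.1 hkl
    simpa [Fin.ext_iff] using this
  have idx_congr : ∀ {k l : ℕ} (hk : k < r.length) (hl : l < r.length), k = l →
      idx r k hk = idx r l hl := by
    rintro k l hk hl rfl; rfl
  set G' := G.deleteEdges (edgesOf r) with hG'def
  have hDcases : ∀ (u w : V), s(u, w) ∈ edgesOf r → ∃ (t : ℕ) (hts : t + 1 < r.length),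
      (u = idx r t (by omega) ∧ w = idx r (t + 1) hts) ∨
      (u = idx r (t + 1) hts ∧ w = idx r t (by omega)) := by
    intro u w he
    obtain ⟨t, hts, heq⟩ := he
    exact ⟨t, hts, Sym2.eq_iff.1 heq⟩
  have hconn1 : (G.deleteEdges (edgesOf (r.drop 1))).Connected := by
    have hsub : ContigSub (r.drop 1) r := by
      refine ⟨1, r.length - 1, by omega, by omega, ?_⟩
      show r.drop 1 = (r.take (r.length - 1 + 1)).drop 1
      rw [show r.length - 1 + 1 = r.length by omega, List.take_length]
    have hne' : r.drop 1 ≠ r := by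
      intro hq; apply_fun List.length at hq; simp at hq; omega
    exact not_not.1 (hmin (r.drop 1) hsub hne')
  have hconn2 : (G.deleteEdges (edgesOf (r.take (r.length - 1)))).Connected := by
    have hsub : ContigSub (r.take (r.length - 1)) r := by
      refine ⟨0, r.length - 2, by omega, by omega, ?_⟩
      show r.take (r.length - 1) = (r.take (r.length - 2 + 1)).drop 0
      rw [show r.length - 2 + 1 = r.length - 1 by omega, List.drop_zero]
    have hne' : r.take (r.length - 1) ≠ r := by
      intro hq; apply_fun List.length at hq; simp at hq; omega
    exact not_not.1 (hmin _ hsub hne')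
  have hkey1 : ∀ e ∈ edgesOf r, e ∉ edgesOf (r.drop 1) →
      e = s(idx r 0 (by omega), idx r 1 (by omega)) := by
    intro e he hnm
    obtain ⟨t, hts, rfl⟩ := he
    rcases Nat.eq_zero_or_pos t with rfl | hpos
    · rfl
    exfalso
    apply hnm
    have hlen : (t - 1) + 1 < (r.drop 1).length := by
      rw [List.length_drop]; omega
    refine ⟨t - 1, hlen, ?_⟩
    have e1 : (r.drop 1).get ⟨t - 1, by omega⟩ = r.get ⟨t, by omega⟩ := by
      simp only [List.get_eq_getElem, List.getElem_drop]
      congr 1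
      omega
    have e2 : (r.drop 1).get ⟨t - 1 + 1, hlen⟩ = r.get ⟨t + 1, hts⟩ := by
      simp only [List.get_eq_getElem, List.getElem_drop]
      congr 1
      omega
    rw [e1, e2]
  have hkey2 : ∀ e ∈ edgesOf r, e ∉ edgesOf (r.take (r.length - 1)) →
      e = s(idx r (r.length - 2) (by omega), idx r (r.length - 1) (by omega)) := by
    intro e he hnm
    obtain ⟨t, hts, rfl⟩ := he
    by_cases hcase : t + 2 < r.length
    · exfalso
      apply hnm
      have hlen : t + 1 < (r.take (r.length - 1)).length := by
        rw [List.length_take]; omega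
      refine ⟨t, hlen, ?_⟩
      have e1 : (r.take (r.length - 1)).get ⟨t, by omega⟩ = r.get ⟨t, by omega⟩ := by
        simp only [List.get_eq_getElem, List.getElem_take]
      have e2 : (r.take (r.length - 1)).get ⟨t + 1, hlen⟩ = r.get ⟨t + 1, hts⟩ := by
        simp only [List.get_eq_getElem, List.getElem_take]
      rw [e1, e2]
    · have h1 : t = r.length - 2 := by omega
      exact congrArg₂ (fun x y => s(x, y)) (idx_congr _ _ h1) (idx_congr _ _ (by omega))
  have hdich1 : ∀ v, G'.Reachable v (idx r 0 (by omega)) ∨ G'.Reachable v (idx r 1 (by omega)) :=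
    dichotomy_of_connected hconn1 hkey1
  have hdich2 : ∀ v, G'.Reachable v (idx r (r.length - 2) (by omega)) ∨
      G'.Reachable v (idx r (r.length - 1) (by omega)) :=
    dichotomy_of_connected hconn2 hkey2
  have hVne : Nonempty V := ⟨idx r 0 (by omega)⟩
  have hconn_of : ∀ (x y : V), (∀ v, G'.Reachable v x ∨ G'.Reachable v y) →
      G'.Reachable x y → False := by
    intro x y hd hxy
    apply hsep
    rw [connected_iff]
    refine ⟨fun u v => ?_, hVne⟩
    rcases hd u with hu | hu <;> rcases hd v with hv | hv
    · exact hu.trans hv.symm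
    · exact (hu.trans hxy).trans hv.symm
    · exact (hu.trans hxy.symm).trans hv.symm
    · exact hu.trans hv.symm
  have hnr01 : ¬ G'.Reachable (idx r 0 (by omega)) (idx r 1 (by omega)) :=
    fun hh => hconn_of _ _ hdich1 hh
  have hnrlast : ¬ G'.Reachable (idx r (r.length - 2) (by omega))
      (idx r (r.length - 1) (by omega)) :=
    fun hh => hconn_of _ _ hdich2 hh
  have hopp : ∀ (u v w : V), ¬G'.Reachable u v → ¬G'.Reachable u w → G'.Reachable v w := by
    intro u v w h1 h2
    rcases hdich1 u with hu | hu <;> rcases hdich1 v with hv | hv <;>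
      rcases hdich1 w with hww | hww
    · exact absurd (hu.trans hv.symm) h1
    · exact absurd (hu.trans hv.symm) h1
    · exact absurd (hu.trans hww.symm) h2
    · exact hv.trans hww.symm
    · exact hv.trans hww.symm
    · exact absurd (hu.trans hww.symm) h2
    · exact absurd (hu.trans hv.symm) h1
    · exact absurd (hu.trans hv.symm) h1
  -- Step I: every consecutive pair of `r` is disconnected in `G'`.
  have hcross : ∀ t (ht : t + 1 < r.length),
      ¬ G'.Reachable (idx r t (by omega)) (idx r (t + 1) ht) := by
    intro t
    induction t using Nat.strong_induction_on with
    | _ t IH =>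
      intro ht
      rcases Nat.eq_zero_or_pos t with rfl | htpos
      · exact hnr01
      by_cases hlastc : t + 2 = r.length
      · intro hre
        apply hnrlast
        have e1 : idx r (r.length - 2) (by omega) = idx r t (by omega) :=
          idx_congr _ _ (by omega)
        have e2 : idx r (r.length - 1) (by omega) = idx r (t + 1) ht :=
          idx_congr _ _ (by omega)
        rw [e1, e2]
        exact hre
      have ht2 : t + 2 < r.length := by omega
      by_contra hgap
      obtain ⟨t', rfl⟩ : ∃ t'', t = t'' + 1 := ⟨t - 1, by omega⟩
      have hb0 : t' < r.length := by omega
      have hb1 : t' + 1 < r.length := by omega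
      have hb2 : t' + 2 < r.length := by omega
      have hty : ¬ G'.Reachable (idx r t' hb0) (idx r (t' + 1) hb1) := IH t' (by omega) hb1
      set L : Set ℕ := {s | t' + 1 ≤ s ∧ ∃ hs : s + 1 < r.length,
        ¬ G'.Reachable (idx r s (Nat.lt_of_succ_lt hs)) (idx r (s + 1) hs)} with hLdef
      have hLne : L.Nonempty := by
        refine ⟨r.length - 2, by omega, by omega, ?_⟩
        intro hre
        apply hnrlast
        have e2 : idx r (r.length - 2 + 1) (by omega) = idx r (r.length - 1) (by omega) :=
          idx_congr _ _ (by omega)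
        rw [← e2]
        exact hre
      set l := sInf L with hldef
      obtain ⟨hl1, hls, hlnr⟩ := Nat.sInf_mem hLne
      have hlb : l < r.length := by omega
      have hlmin : ∀ s, t' + 1 ≤ s → s < l → ∀ hs : s + 1 < r.length,
          G'.Reachable (idx r s (Nat.lt_of_succ_lt hs)) (idx r (s + 1) hs) := by
        intro s h1 h2 hs
        by_contra hc
        exact absurd (csInf_le (OrderBot.bddBelow _) (show s ∈ L from ⟨h1, hs, hc⟩)) (by omega)
      have hlgt : t' + 1 < l := by
        rcases Nat.lt_or_ge (t' + 1) l with h' | h'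
        · exact h'
        · exfalso
          have hleq : l = t' + 1 := by omega
          apply hlnr
          have e1 : idx r l (Nat.lt_of_succ_lt hls) = idx r (t' + 1) hb1 :=
            idx_congr _ _ hleq
          have e2 : idx r (l + 1) hls = idx r (t' + 2) hb2 :=
            idx_congr _ _ (by omega)
          rw [e1, e2]
          exact hgap
      have hchainreach : ∀ s (hs1 : t' + 1 ≤ s), s ≤ l → ∀ hsb : s < r.length,
          G'.Reachable (idx r (t' + 1) hb1) (idx r s hsb) := by
        intro s hs1
        induction s, hs1 using Nat.le_induction with
        | base => intro _ hsb; exact Reachable.refl _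
        | succ s hs1 ihs =>
          intro hs2 hsb
          exact (ihs (by omega) (by omega)).trans (hlmin s hs1 (by omega) (by omega))
      have hXl : G'.Reachable (idx r (t' + 1) hb1) (idx r l hlb) :=
        hchainreach l (by omega) le_rfl hlb
      have hnXb : ¬ G'.Reachable (idx r (t' + 1) hb1) (idx r (l + 1) hls) := by
        intro hc
        exact hlnr (hXl.symm.trans hc)
      have hbY : G'.Reachable (idx r t' hb0) (idx r (l + 1) hls) :=
        hopp (idx r (t' + 1) hb1) _ _ (fun hc => hty hc.symm) hnXb
      set Cfg : Set ℕ := {k | ∃ (va vb : V) (hab : G.Adj va vb)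
        (Px : G.Walk (idx r (t' + 1) hb1) va) (Py : G.Walk vb (idx r t' hb0)),
        Px.IsPath ∧ Py.IsPath ∧
        (∀ z ∈ Px.support, G'.Reachable (idx r (t' + 1) hb1) z) ∧
        (∀ z ∈ Px.support, ∀ u (hu : u + 2 ≤ t' + 1) (hun : u < r.length), z ≠ idx r u hun) ∧
        (∀ z ∈ Py.support, G'.Reachable (idx r t' hb0) z) ∧
        ¬(va = idx r (t' + 1) hb1 ∧ vb = idx r t' hb0) ∧
        Px.length + Py.length = k} with hCdef
      have hCne : Cfg.Nonempty := by
        obtain ⟨Px, hPxP, hPxlen, hPxs⟩ := walkSeg r hch hnd (t' + 1) l (by omega) hlb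
        obtain ⟨Py, hPyP, hPys⟩ := exists_path_support (deleteEdges_le _) hbY.symm
        refine ⟨Px.length + Py.length, idx r l hlb, idx r (l + 1) hls, hadj l hls, Px, Py,
          hPxP, hPyP, ?_, ?_, ?_, ?_, rfl⟩
        · intro z hz
          obtain ⟨s, hsb, hs1, hs2, rfl⟩ := hPxs z hz
          exact hchainreach s hs1 hs2 hsb
        · intro z hz u hu hun hzu
          obtain ⟨s, hsb, hs1, hs2, rfl⟩ := hPxs z hz
          have := hinj _ _ _ _ hzu
          omega
        · intro z hz
          exact hbY.trans (hPys z hz)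
        · rintro ⟨h1, h2⟩
          have := hinj _ _ _ _ h1
          omega
      set k0 := sInf Cfg with hk0def
      obtain ⟨va, vb, hab, Px, Py, hPxP, hPyP, hPxX, hPxE, hPyY, hcstr, hklen⟩ :=
        Nat.sInf_mem hCne
      have hCmin : ∀ m ∈ Cfg, k0 ≤ m := fun m hm => csInf_le (OrderBot.bddBelow _) hm
      have hdisjXY : ∀ z, z ∈ Px.support → z ∈ Py.support → False := by
        intro z h1 h2
        exact hty ((hPxX z h1).trans (hPyY z h2).symm).symm
      rcases Nat.lt_or_ge k0 2 with hk2 | hk2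
      · rcases Nat.eq_zero_or_pos Py.length with hPy0 | hPy1
        · have hvb : vb = idx r t' hb0 := length_zero_eq Py hPy0
          rcases Nat.eq_zero_or_pos Px.length with hPx0 | hPx1
          · exact hcstr ⟨(length_zero_eq Px hPx0).symm, hvb⟩
          · have hPx1' : Px.length = 1 := by omega
            have hadjx : G.Adj (idx r (t' + 1) hb1) va := adj_of_length_one_s4 Px hPx1'
            by_cases hmem : s(va, idx r t' hb0) ∈ edgesOf r
            · obtain ⟨s, hs, hcase⟩ := hDcases _ _ hmem
              rcases hcase with ⟨h1, h2⟩ | ⟨h1, h2⟩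
              · have hseq := hinj _ _ _ _ h2
                exact hPxE va Px.end_mem_support s (by omega) _ h1
              · have hseq := hinj _ _ _ _ h2
                exact hadjx.ne (h1.trans (idx_congr _ _ (by omega))).symm
            · apply hty
              have hab' : G.Adj va (idx r t' hb0) := by rwa [hvb] at hab
              have hGadj : G'.Adj va (idx r t' hb0) := by
                rw [hG'def, deleteEdges_adj]
                exact ⟨hab', hmem⟩
              exact ((hPxX va Px.end_mem_support).trans hGadj.reachable).symm
        · have hPy1' : Py.length = 1 := by omega
          have hPx0 : Px.length = 0 := by omega
          have hva : idx r (t' + 1) hb1 = va := length_zero_eq Px hPx0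
          have hadjy : G.Adj vb (idx r t' hb0) := adj_of_length_one_s4 Py hPy1'
          by_cases hmem : s(idx r (t' + 1) hb1, vb) ∈ edgesOf r
          · obtain ⟨s, hs, hcase⟩ := hDcases _ _ hmem
            rcases hcase with ⟨h1, h2⟩ | ⟨h1, h2⟩
            · have hseq := hinj _ _ _ _ h1
              apply hty
              have hvb2 : vb = idx r (t' + 2) hb2 := h2.trans (idx_congr _ _ (by omega))
              have h3 : G'.Reachable (idx r t' hb0) (idx r (t' + 2) hb2) :=
                hvb2 ▸ hPyY vb Py.start_mem_support
              exact (hgap.trans h3.symm).symm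
            · have hseq := hinj _ _ _ _ h1
              exact hadjy.ne (h2.trans (idx_congr _ _ (by omega)))
          · apply hty
            have hab' : G.Adj (idx r (t' + 1) hb1) vb := by rwa [← hva] at hab
            have hGadj : G'.Adj (idx r (t' + 1) hb1) vb := by
              rw [hG'def, deleteEdges_adj]
              exact ⟨hab', hmem⟩
            exact (hGadj.reachable.trans (hPyY vb Py.start_mem_support).symm).symm
      · set P : G.Walk (idx r (t' + 1) hb1) (idx r t' hb0) :=
          Px.append (Walk.cons hab Py) with hPdef
        have hPsupp : P.support = Px.support ++ Py.support := by
          rw [hPdef, Walk.support_append, Walk.support_cons, List.tail_cons]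
        have hPpath : P.IsPath := by
          rw [Walk.isPath_def, hPsupp, List.nodup_append]
          exact ⟨hPxP.support_nodup, hPyP.support_nodup, fun z h1 _ h2 hzz => hdisjXY z h1 (hzz ▸ h2)⟩
        have hPedges : P.edges = Px.edges ++ (s(va, vb) :: Py.edges) := by
          rw [hPdef, Walk.edges_append, Walk.edges_cons]
        have hecyc : s(idx r t' hb0, idx r (t' + 1) hb1) ∉ P.edges := by
          rw [hPedges]
          intro hm
          rcases List.mem_append.1 hm with hm | hm
          · exact hty ((hPxX _ (Px.fst_mem_support_of_mem_edges hm))).symm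
          · rcases List.mem_cons.1 hm with hm | hm
            · rcases Sym2.eq_iff.1 hm with ⟨h1, h2⟩ | ⟨h1, h2⟩
              · apply hty
                rw [h1]
                exact (hPxX va Px.end_mem_support).symm
              · exact hcstr ⟨h2.symm, h1.symm⟩
            · exact hty (hPyY _ (Py.snd_mem_support_of_mem_edges hm))
        set c : G.Walk (idx r t' hb0) (idx r t' hb0) := Walk.cons (hadj t' hb1) P with hcdef
        have hcyc : c.IsCycle := (Walk.cons_isCycle_iff P (hadj t' hb1)).2 ⟨hPpath, hecyc⟩
        have hclen : 4 ≤ c.length := by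
          rw [hcdef]
          simp only [Walk.length_cons, hPdef, Walk.length_append]
          omega
        obtain ⟨u, w, hu, hw, huw, hne'⟩ := hchordal c hcyc hclen
        have hcsupp : ∀ z ∈ c.support, z ∈ Px.support ∨ z ∈ Py.support := by
          intro z hz
          rw [hcdef, Walk.support_cons] at hz
          rcases List.mem_cons.1 hz with rfl | hz
          · exact Or.inr Py.end_mem_support
          · rw [hPsupp] at hz
            exact List.mem_append.1 hz
        have hPxsub : ∀ e ∈ Px.edges, e ∈ c.edges := by
          intro e he
          rw [hcdef, Walk.edges_cons, hPedges]
          simp [he]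
        have hPysub : ∀ e ∈ Py.edges, e ∈ c.edges := by
          intro e he
          rw [hcdef, Walk.edges_cons, hPedges]
          simp [he]
        have habmem : s(va, vb) ∈ c.edges := by
          rw [hcdef, Walk.edges_cons, hPedges]
          simp
        have hmixcase : ∀ (u w : V), u ∈ Px.support → w ∈ Py.support → G.Adj u w →
            s(u, w) ∉ c.edges → False := by
          intro u w hup hwp hadjuw hnuw
          have hlt : (Px.takeUntil u hup).length + (Py.dropUntil w hwp).length < k0 := by
            have e1 := length_take_add_drop Px hup
            have e2 := length_take_add_drop Py hwp
            rcases Nat.eq_zero_or_pos (Px.dropUntil u hup).length with h0 | hpos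
            · rcases Nat.eq_zero_or_pos (Py.takeUntil w hwp).length with h0' | hpos'
              · exfalso
                apply hnuw
                have hu' : u = va := length_zero_eq _ h0
                have hw' : vb = w := length_zero_eq _ h0'
                rw [hu', ← hw']
                exact habmem
              · omega
            · omega
          have hC : (Px.takeUntil u hup).length + (Py.dropUntil w hwp).length ∈ Cfg := by
            refine ⟨u, w, hadjuw, Px.takeUntil u hup, Py.dropUntil w hwp,
              hPxP.takeUntil hup, hPyP.dropUntil hwp, ?_, ?_, ?_, ?_, rfl⟩
            · intro z hz
              exact hPxX z (Walk.support_takeUntil_subset _ _ hz)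
            · intro z hz
              exact hPxE z (Walk.support_takeUntil_subset _ _ hz)
            · intro z hz
              exact hPyY z (Walk.support_dropUntil_subset _ _ hz)
            · rintro ⟨rfl, rfl⟩
              apply hnuw
              rw [hcdef, Walk.edges_cons]
              exact List.mem_cons.2 (Or.inl Sym2.eq_swap)
          exact absurd (hCmin _ hC) (by omega)
        have hsamePx : ∀ (u w : V), u ∈ Px.support → w ∈ Px.support → G.Adj u w →
            s(u, w) ∉ c.edges → False := by
          intro u w h1 h2 ha hn
          obtain ⟨q', hq'P, hq'l, hq's⟩ := shortcut_s4 Px hPxP h1 h2 ha (fun hm => hn (hPxsub _ hm))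
          have hC : q'.length + Py.length ∈ Cfg :=
            ⟨va, vb, hab, q', Py, hq'P, hPyP, (fun z hz => hPxX z (hq's z hz)),
             (fun z hz => hPxE z (hq's z hz)), hPyY, hcstr, rfl⟩
          exact absurd (hCmin _ hC) (by omega)
        have hsamePy : ∀ (u w : V), u ∈ Py.support → w ∈ Py.support → G.Adj u w →
            s(u, w) ∉ c.edges → False := by
          intro u w h1 h2 ha hn
          obtain ⟨q', hq'P, hq'l, hq's⟩ := shortcut_s4 Py hPyP h1 h2 ha (fun hm => hn (hPysub _ hm))
          have hC : Px.length + q'.length ∈ Cfg :=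
            ⟨va, vb, hab, Px, q', hPxP, hq'P, hPxX, hPxE,
             (fun z hz => hPyY z (hq's z hz)), hcstr, rfl⟩
          exact absurd (hCmin _ hC) (by omega)
        rcases hcsupp u hu with h1 | h1 <;> rcases hcsupp w hw with h2 | h2
        · exact hsamePx u w h1 h2 huw hne'
        · exact hmixcase u w h1 h2 huw hne'
        · exact hmixcase w u h2 h1 huw.symm (fun hm => hne' (by rwa [Sym2.eq_swap] at hm))
        · exact hsamePy u w h1 h2 huw hne'
  -- Step II: the chord.
  have hbi : i < r.length := by omega
  have hbi1 : i + 1 < r.length := by omega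
  have hni : ¬ G'.Reachable (idx r i hbi) (idx r (i + 1) hbi1) := hcross i hbi1
  have hni1 : ¬ G'.Reachable (idx r (i + 1) hbi1) (idx r (i + 2) h) := hcross (i + 1) h
  have h02 : G'.Reachable (idx r i hbi) (idx r (i + 2) h) :=
    hopp (idx r (i + 1) hbi1) _ _ (fun hc => hni hc.symm) hni1
  set S : Set ℕ := {k | ∃ q : G.Walk (idx r (i + 2) h) (idx r i hbi), q.IsPath ∧
      (∀ z ∈ q.support, G'.Reachable (idx r i hbi) z) ∧ q.length = k} with hSdef
  have hSne : S.Nonempty := by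
    obtain ⟨q, hq, hqs⟩ := exists_path_support (deleteEdges_le _) h02.symm
    exact ⟨q.length, q, hq, fun z hz => h02.trans (hqs z hz), rfl⟩
  obtain ⟨q, hqP, hqX, hqlen⟩ := Nat.sInf_mem hSne
  have hSmin : ∀ m ∈ S, sInf S ≤ m := fun m hm => csInf_le (OrderBot.bddBelow _) hm
  by_cases hq0 : q.length = 0
  · exact absurd (hinj _ _ _ _ (length_zero_eq q hq0)) (by omega)
  by_cases hq1 : q.length = 1
  · exact (adj_of_length_one_s4 q hq1).symm
  exfalso
  have hq2 : 2 ≤ q.length := by omega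
  have hadj01 : G.Adj (idx r i hbi) (idx r (i + 1) hbi1) := hadj i hbi1
  have hadj12 : G.Adj (idx r (i + 1) hbi1) (idx r (i + 2) h) := hadj (i + 1) h
  have hnotmem : idx r (i + 1) hbi1 ∉ q.support := fun hm => hni (hqX _ hm)
  set P : G.Walk (idx r (i + 2) h) (idx r (i + 1) hbi1) :=
    q.append (Walk.cons hadj01 Walk.nil) with hPdef
  have hPsupp : P.support = q.support ++ [idx r (i + 1) hbi1] := by
    rw [hPdef, Walk.support_append]
    simp
  have hPpath : P.IsPath := by
    rw [Walk.isPath_def, hPsupp, List.nodup_append]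
    refine ⟨hqP.support_nodup, List.nodup_singleton _, ?_⟩
    intro z hz z' hz' hzz'
    simp only [List.mem_singleton] at hz'
    subst hz'
    subst hzz'
    exact hnotmem hz
  have hPedges : P.edges = q.edges ++ [s(idx r i hbi, idx r (i + 1) hbi1)] := by
    rw [hPdef, Walk.edges_append]
    simp
  have hecyc : s(idx r (i + 1) hbi1, idx r (i + 2) h) ∉ P.edges := by
    rw [hPedges]
    intro hm
    rcases List.mem_append.1 hm with hm | hm
    · exact hnotmem (q.fst_mem_support_of_mem_edges hm)
    · simp only [List.mem_singleton] at hm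
      rcases Sym2.eq_iff.1 hm with ⟨h1, h2⟩ | ⟨h1, h2⟩
      · exact absurd (hinj _ _ _ _ h1) (by omega)
      · exact absurd (hinj _ _ _ _ h2) (by omega)
  set c : G.Walk (idx r (i + 1) hbi1) (idx r (i + 1) hbi1) := Walk.cons hadj12 P with hcdef
  have hcyc : c.IsCycle := (Walk.cons_isCycle_iff P hadj12).2 ⟨hPpath, hecyc⟩
  have hclen : 4 ≤ c.length := by
    rw [hcdef]
    simp only [Walk.length_cons, hPdef, Walk.length_append, Walk.length_nil]
    omega
  obtain ⟨u, w, hu, hw, huw, hne'⟩ := hchordal c hcyc hclen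
  have hcsupp : ∀ z ∈ c.support, z = idx r (i + 1) hbi1 ∨ z ∈ q.support := by
    intro z hz
    rw [hcdef, Walk.support_cons] at hz
    rcases List.mem_cons.1 hz with rfl | hz
    · exact Or.inl rfl
    · rw [hPsupp] at hz
      rcases List.mem_append.1 hz with hz | hz
      · exact Or.inr hz
      · simp only [List.mem_singleton] at hz
        exact Or.inl hz
  have hqedgesub : ∀ e ∈ q.edges, e ∈ c.edges := by
    intro e he
    rw [hcdef, Walk.edges_cons, hPedges]
    simp [he]
  have hmix : ∀ z ∈ q.support, G.Adj (idx r (i + 1) hbi1) z →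
      s(idx r (i + 1) hbi1, z) ∉ c.edges → False := by
    intro z hz hadjz hnem
    by_cases hmem : s(idx r (i + 1) hbi1, z) ∈ edgesOf r
    · obtain ⟨s, hs, hcase⟩ := hDcases _ _ hmem
      rcases hcase with ⟨h1, h2⟩ | ⟨h1, h2⟩
      · have hseq := hinj _ _ _ _ h1
        apply hnem
        rw [hcdef, Walk.edges_cons]
        refine List.mem_cons.2 (Or.inl ?_)
        have hz2 : z = idx r (i + 2) h := h2.trans (idx_congr _ _ (by omega))
        rw [hz2]
      · have hseq := hinj _ _ _ _ h1
        apply hnem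
        rw [hcdef, Walk.edges_cons, hPedges]
        refine List.mem_cons.2 (Or.inr (List.mem_append.2 (Or.inr ?_)))
        simp only [List.mem_singleton]
        have hz2 : z = idx r i hbi := h2.trans (idx_congr _ _ (by omega))
        rw [hz2, Sym2.eq_swap]
    · apply hni
      have hGadj : G'.Adj (idx r (i + 1) hbi1) z := by
        rw [hG'def, deleteEdges_adj]
        exact ⟨hadjz, hmem⟩
      exact (hqX z hz).trans hGadj.reachable.symm
  have hsame : ∀ (u w : V), u ∈ q.support → w ∈ q.support → G.Adj u w →
      s(u, w) ∉ c.edges → False := by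
    intro u w h1 h2 ha hn
    obtain ⟨q', hq'P, hq'l, hq's⟩ := shortcut_s4 q hqP h1 h2 ha (fun hm => hn (hqedgesub _ hm))
    have hmem : q'.length ∈ S := ⟨q', hq'P, fun z hz => hqX z (hq's z hz), rfl⟩
    have := hSmin _ hmem
    omega
  rcases hcsupp u hu with h1 | h1 <;> rcases hcsupp w hw with h2 | h2
  · exact huw.ne (h1.trans h2.symm)
  · exact hmix w h2 (h1 ▸ huw) (h1 ▸ hne')
  · exact hmix u h1 (h2 ▸ huw.symm) (fun hm => hne' (by rw [h2, Sym2.eq_swap]; exact hm))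
  · exact hsame u w h1 h2 huw hne'

end NSP
end

section
/- Let u be a bad vertex of G. Then no non-separating simple path from S to T visits u. -/
open SimpleGraph

namespace NSP

variable {V : Type*}

/-! ### Auxiliary lemmas -/

private lemma nodup_getElem_inj {l : List V} (h : l.Nodup) {m n : ℕ}
    (hm : m < l.length) (hn : n < l.length) (he : l[m]'hm = l[n]'hn) : m = n := by
  have := (h.get_inj_iff (i := ⟨m, hm⟩) (j := ⟨n, hn⟩)).mp
    (by simpa [List.get_eq_getElem] using he)
  simpa using congrArg Fin.val this

private lemma head?_eq_getElem (l : List V) (h0 : 0 < l.length) :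
    l.head? = some (l[0]'h0) := by
  cases l with
  | nil => simp at h0
  | cons x xs => simp

private lemma getLast?_eq_getElem (l : List V) (h0 : 0 < l.length) :
    l.getLast? = some (l[l.length - 1]'(by omega)) := by
  rw [List.getLast?_eq_getLast (List.length_pos_iff.mp h0), List.getLast_eq_getElem]

private lemma walk_closure {G : SimpleGraph V} (P : V → Prop)
    (hP : ∀ x y, G.Adj x y → P y → P x) : ∀ {x y : V}, G.Reachable x y → P y → P x := by
  intro x y h
  obtain ⟨w⟩ := h
  induction w with
  | nil => exact id
  | cons h' w ih => exact fun hy => hP _ _ h' (ih hy)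

private lemma reach_del_seg (G : SimpleGraph V) (D : Set (Sym2 V)) {p : List V}
    (hch : p.Chain' G.Adj) : ∀ (j i : ℕ) (hij : i ≤ j) (hj : j < p.length),
    (∀ (m : ℕ) (hm : i ≤ m) (hm1 : m + 1 ≤ j), s(p[m]'(by omega), p[m+1]'(by omega)) ∉ D) →
    (G.deleteEdges D).Reachable (p[i]'(by omega)) (p[j]'hj) := by
  intro j
  induction j with
  | zero =>
    intro i hi hj _
    have : i = 0 := by omega
    subst this
    exact Reachable.refl _
  | succ j ih =>
    intro i hi hj hd
    by_cases hij : i = j + 1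
    · subst hij; exact Reachable.refl _
    · have hij' : i ≤ j := by omega
      have hadj : G.Adj (p[j]'(by omega)) (p[j+1]'hj) := by
        have := List.isChain_iff_getElem.mp hch j (by omega)
        simpa [List.get_eq_getElem] using this
      have hedge : s(p[j]'(by omega), p[j+1]'hj) ∉ D := hd j hij' (le_refl _)
      have hr := ih i hij' (by omega) (fun m hm hm' => hd m hm (by omega))
      exact hr.trans (SimpleGraph.Adj.reachable
        (by rw [SimpleGraph.deleteEdges_adj]; exact ⟨hadj, hedge⟩))

private lemma seg_hits (G : SimpleGraph V) (D : Set (Sym2 V)) {p : List V}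
    (hch : p.Chain' G.Adj) {i j : ℕ} (hij : i ≤ j) (hj : j < p.length)
    (hnr : ¬ (G.deleteEdges D).Reachable (p[i]'(by omega)) (p[j]'hj)) :
    ∃ (m : ℕ) (hm : i ≤ m) (hm1 : m + 1 ≤ j),
      s(p[m]'(by omega), p[m+1]'(by omega)) ∈ D := by
  by_contra h
  push_neg at h
  exact hnr (reach_del_seg G D hch j i hij hj (fun m hm hm1 => h m hm hm1))

/-- No non-separating simple path from `S` to `T` visits a bad vertex. -/
theorem bad_vertex_not_on_nonSeparating_path
    {V : Type*} [Fintype V] (G : SimpleGraph V)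
    (hconn : G.Connected) (hchordal : Chordal G)
    (S T : V) (hST : S ≠ T) (hnb : ∀ e : Sym2 V, ¬ G.IsBridge e)
    (u : V) (hu : BadVertex G S T u)
    (p : List V) (hp : IsSimpleSeq G p)
    (hS : p.head? = some S) (hT : p.getLast? = some T)
    (hns : ¬ SeparatingPath G p) :
    u ∉ p := by
  classical
  obtain ⟨r, hsepr, htrav, hrlen, hru⟩ := hu
  obtain ⟨⟨⟨hrne, hrch⟩, hrnd⟩, hrsep, -⟩ := hsepr
  rcases r with _ | ⟨a, r⟩; · simp at hrlen
  rcases r with _ | ⟨mid, r⟩; · simp at hrlen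
  rcases r with _ | ⟨b, r⟩; · simp at hrlen
  rcases r with _ | ⟨c, r⟩; swap; · simp at hrlen
  have hmu : u = mid := (show mid = u by simpa using hru).symm
  subst hmu
  obtain ⟨hadjau, hadjub⟩ : G.Adj a u ∧ G.Adj u b := by
    simpa [List.Chain', List.isChain_cons_cons] using hrch
  obtain ⟨⟨hne_au, hne_ab⟩, hne_ub⟩ : (a ≠ u ∧ a ≠ b) ∧ u ≠ b := by
    simpa using hrnd
  -- characterize the edges of r
  have hD : ∀ e, e ∈ edgesOf ([a, u, b] : List V) ↔ e = s(a, u) ∨ e = s(u, b) := by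
    intro e
    constructor
    · rintro ⟨i, h, rfl⟩
      have h' : i < 2 := by simp at h; omega
      interval_cases i
      · exact Or.inl rfl
      · exact Or.inr rfl
    · rintro (rfl | rfl)
      · exact ⟨0, by simp, rfl⟩
      · exact ⟨1, by simp, rfl⟩
  set H := G.deleteEdges (edgesOf ([a, u, b] : List V)) with hHdef
  have hHnc : ¬ H.Connected := hrsep
  have hHadj : ∀ x y, G.Adj x y → s(x, y) ∉ edgesOf ([a, u, b] : List V) → H.Adj x y :=
    fun x y h1 h2 => SimpleGraph.deleteEdges_adj.mpr ⟨h1, h2⟩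
  -- no-bridge facts
  have hbau : (G.deleteEdges {s(a, u)}).Reachable a u := by
    by_contra hcon
    exact hnb s(a, u) (SimpleGraph.isBridge_iff.mpr hcon)
  have hbub : (G.deleteEdges {s(u, b)}).Reachable u b := by
    by_contra hcon
    exact hnb s(u, b) (SimpleGraph.isBridge_iff.mpr hcon)
  -- every vertex reaches a, u or b in H
  have claim1 : ∀ v, H.Reachable v a ∨ H.Reachable v u ∨ H.Reachable v b := by
    intro v
    refine walk_closure (G := G)
      (fun x => H.Reachable x a ∨ H.Reachable x u ∨ H.Reachable x b) ?_
      (hconn.preconnected v a) (Or.inl (Reachable.refl a))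
    intro x y hxy hy
    by_cases hm : s(x, y) ∈ edgesOf ([a, u, b] : List V)
    · rw [hD] at hm
      rcases hm with h | h <;> rw [Sym2.eq_iff] at h <;>
        rcases h with ⟨rfl, rfl⟩ | ⟨rfl, rfl⟩
      · exact Or.inl (Reachable.refl _)
      · exact Or.inr (Or.inl (Reachable.refl _))
      · exact Or.inr (Or.inl (Reachable.refl _))
      · exact Or.inr (Or.inr (Reachable.refl _))
    · have hH : H.Adj x y := hHadj x y hxy hm
      rcases hy with h | h | h
      · exact Or.inl (hH.reachable.trans h)
      · exact Or.inr (Or.inl (hH.reachable.trans h))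
      · exact Or.inr (Or.inr (hH.reachable.trans h))
  have key1 : H.Reachable a u → H.Reachable u b := by
    intro Rau
    refine walk_closure (G := G.deleteEdges {s(u, b)})
      (fun x => H.Reachable x b) ?_ hbub (Reachable.refl b)
    intro x y hxy hy
    obtain ⟨hxyG, hxyne⟩ := SimpleGraph.deleteEdges_adj.mp hxy
    by_cases hm : s(x, y) ∈ edgesOf ([a, u, b] : List V)
    · rw [hD] at hm
      rcases hm with h | h
      · rw [Sym2.eq_iff] at h
        rcases h with ⟨rfl, rfl⟩ | ⟨rfl, rfl⟩
        · exact Rau.trans hy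
        · exact Rau.symm.trans hy
      · exact absurd h (by simpa using hxyne)
    · exact (hHadj x y hxyG hm).reachable.trans hy
  have key2 : H.Reachable u b → H.Reachable a u := by
    intro Rub
    refine walk_closure (G := G.deleteEdges {s(a, u)})
      (fun x => H.Reachable x u) ?_ hbau (Reachable.refl u)
    intro x y hxy hy
    obtain ⟨hxyG, hxyne⟩ := SimpleGraph.deleteEdges_adj.mp hxy
    by_cases hm : s(x, y) ∈ edgesOf ([a, u, b] : List V)
    · rw [hD] at hm
      rcases hm with h | h
      · exact absurd h (by simpa using hxyne)
      · rw [Sym2.eq_iff] at h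
        rcases h with ⟨rfl, rfl⟩ | ⟨rfl, rfl⟩
        · exact Reachable.refl _
        · exact Rub.symm
    · exact (hHadj x y hxyG hm).reachable.trans hy
  have hcomp : ¬ (H.Reachable a u ∧ H.Reachable u b) := by
    rintro ⟨Rau, Rub⟩
    apply hHnc
    rw [SimpleGraph.connected_iff]
    refine ⟨?_, hconn.nonempty⟩
    have to_a : ∀ {x : V},
        (H.Reachable x a ∨ H.Reachable x u ∨ H.Reachable x b) → H.Reachable x a := by
      rintro x (h | h | h)
      · exact h
      · exact h.trans Rau.symm
      · exact h.trans (Rau.trans Rub).symm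
    intro v w
    exact (to_a (claim1 v)).trans (to_a (claim1 w)).symm
  have hnRau : ¬ H.Reachable a u := fun h => hcomp ⟨h, key1 h⟩
  have hnRub : ¬ H.Reachable u b := fun h => hcomp ⟨key2 h, h⟩
  have hRab : H.Reachable a b := by
    by_contra hn
    have := walk_closure (G := G.deleteEdges {s(a, u)})
      (fun x => H.Reachable x u ∨ H.Reachable x b) ?_ hbau (Or.inl (Reachable.refl u))
    · rcases this with h | h
      · exact hnRau h
      · exact hn h
    intro x y hxy hy
    obtain ⟨hxyG, hxyne⟩ := SimpleGraph.deleteEdges_adj.mp hxy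
    by_cases hm : s(x, y) ∈ edgesOf ([a, u, b] : List V)
    · rw [hD] at hm
      rcases hm with h | h
      · exact absurd h (by simpa using hxyne)
      · rw [Sym2.eq_iff] at h
        rcases h with ⟨rfl, rfl⟩ | ⟨rfl, rfl⟩
        · exact Or.inl (Reachable.refl _)
        · exact Or.inr (Reachable.refl _)
    · have hH := (hHadj x y hxyG hm).reachable
      rcases hy with h | h
      · exact Or.inl (hH.trans h)
      · exact Or.inr (hH.trans h)
  -- use traversability to place S and T
  obtain ⟨P0, ⟨⟨hP0ne, hP0ch⟩, hP0nd⟩, hP0S, hP0T, t, j, htj, hjless, hsub⟩ := htrav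
  have hP0pos : 0 < P0.length := List.length_pos_iff.mpr hP0ne
  have hlen3 : (3 : ℕ) = min (j + 1) P0.length - t := by
    have := congrArg List.length hsub
    simpa [subseq, List.length_drop, List.length_take] using this
  obtain rfl : j = t + 2 := by omega
  have ht2 : t + 2 < P0.length := hjless
  have hsub' : (P0.take (t + 3)).drop t = [a, u, b] := by rw [hsub]; rfl
  have hta : P0[t]'(by omega) = a := by
    have h0 : ((P0.take (t + 3)).drop t)[0]'(by rw [hsub']; simp) = a := by
      simp [hsub']
    simpa [List.getElem_drop, List.getElem_take] using h0
  have htu : P0[t + 1]'(by omega) = u := by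
    have h0 : ((P0.take (t + 3)).drop t)[1]'(by rw [hsub']; simp) = u := by
      simp [hsub']
    simpa [List.getElem_drop, List.getElem_take] using h0
  have htb : P0[t + 2]'(by omega) = b := by
    have h0 : ((P0.take (t + 3)).drop t)[2]'(by rw [hsub']; simp) = b := by
      simp [hsub']
    simpa [List.getElem_drop, List.getElem_take] using h0
  have hP00 : P0[0]'hP0pos = S := by
    have := hP0S
    rw [head?_eq_getElem P0 hP0pos] at this
    exact Option.some.inj this
  have hP0L : P0[P0.length - 1]'(by omega) = T := by
    have := hP0T
    rw [getLast?_eq_getElem P0 hP0pos] at this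
    exact Option.some.inj this
  have hSa : H.Reachable S a := by
    have hd : ∀ (m : ℕ) (hm : 0 ≤ m) (hm1 : m + 1 ≤ t),
        s(P0[m]'(by omega), P0[m+1]'(by omega)) ∉ edgesOf ([a, u, b] : List V) := by
      intro m _ hm1 hmem
      rw [hD] at hmem
      rcases hmem with h | h
      · rw [← hta, ← htu, Sym2.eq_iff] at h
        rcases h with ⟨h1, h2⟩ | ⟨h1, h2⟩
        · have := nodup_getElem_inj hP0nd _ _ h1; omega
        · have := nodup_getElem_inj hP0nd _ _ h1; omega
      · rw [← htu, ← htb, Sym2.eq_iff] at h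
        rcases h with ⟨h1, h2⟩ | ⟨h1, h2⟩
        · have := nodup_getElem_inj hP0nd _ _ h1; omega
        · have := nodup_getElem_inj hP0nd _ _ h1; omega
    have := reach_del_seg G (edgesOf ([a, u, b] : List V)) hP0ch t 0
      (Nat.zero_le _) (by omega) hd
    rwa [hP00, hta] at this
  have hbT : H.Reachable b T := by
    have hd : ∀ (m : ℕ) (hm : t + 2 ≤ m) (hm1 : m + 1 ≤ P0.length - 1),
        s(P0[m]'(by omega), P0[m+1]'(by omega)) ∉ edgesOf ([a, u, b] : List V) := by
      intro m hm hm1 hmem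
      rw [hD] at hmem
      rcases hmem with h | h
      · rw [← hta, ← htu, Sym2.eq_iff] at h
        rcases h with ⟨h1, h2⟩ | ⟨h1, h2⟩
        · have := nodup_getElem_inj hP0nd _ _ h1; omega
        · have := nodup_getElem_inj hP0nd _ _ h1; omega
      · rw [← htu, ← htb, Sym2.eq_iff] at h
        rcases h with ⟨h1, h2⟩ | ⟨h1, h2⟩
        · have := nodup_getElem_inj hP0nd _ _ h1; omega
        · have := nodup_getElem_inj hP0nd _ _ h2; omega
    have hj1 : t + 2 ≤ P0.length - 1 := by omega
    have hj2 : P0.length - 1 < P0.length := by omega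
    have := reach_del_seg G (edgesOf ([a, u, b] : List V)) hP0ch (P0.length - 1) (t + 2)
      hj1 hj2 hd
    rwa [htb, hP0L] at this
  -- now the given path p
  obtain ⟨⟨hpne, hpch⟩, hpnd⟩ := hp
  intro hmem
  obtain ⟨⟨k, hklen⟩, hk0⟩ := List.mem_iff_get.mp hmem
  have hk : p[k]'hklen = u := by simpa using hk0
  clear hk0
  have hppos : 0 < p.length := by omega
  have hp0 : p[0]'hppos = S := by
    have := hS
    rw [head?_eq_getElem p hppos] at this
    exact Option.some.inj this
  have hpL : p[p.length - 1]'(by omega) = T := by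
    have := hT
    rw [getLast?_eq_getElem p hppos] at this
    exact Option.some.inj this
  have hk0 : 0 < k := by
    rcases Nat.eq_zero_or_pos k with rfl | h
    · exfalso
      have hSu : S = u := hp0.symm.trans hk
      exact hnRau ((hSu ▸ hSa).symm)
    · exact h
  have hk1 : k + 1 < p.length := by
    by_contra h
    have hkl : k = p.length - 1 := by omega
    subst hkl
    have hTu : T = u := hpL.symm.trans hk
    exact hnRub ((hTu ▸ hbT).symm)
  -- the prefix of p must hit an edge of r
  have hnSu : ¬ H.Reachable (p[0]'hppos) (p[k]'hklen) := by
    rw [hp0, hk]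
    intro h
    exact hnRau (hSa.symm.trans h)
  obtain ⟨m, hm0, hm1, hmem1⟩ := seg_hits G (edgesOf ([a, u, b] : List V)) hpch
    (Nat.zero_le k) hklen hnSu
  have hmk : m + 1 = k := by
    have hmem1' := hmem1
    rw [hD] at hmem1'
    rcases hmem1' with h | h
    · rw [Sym2.eq_iff] at h
      rcases h with ⟨h1, h2⟩ | ⟨h1, h2⟩
      · rw [← hk] at h2; exact nodup_getElem_inj hpnd _ _ h2
      · rw [← hk] at h1; have := nodup_getElem_inj hpnd _ _ h1; omega
    · rw [Sym2.eq_iff] at h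
      rcases h with ⟨h1, h2⟩ | ⟨h1, h2⟩
      · rw [← hk] at h1; have := nodup_getElem_inj hpnd _ _ h1; omega
      · rw [← hk] at h2; exact nodup_getElem_inj hpnd _ _ h2
  have hmlt1 : m < p.length := by omega
  have hmlt2 : m + 1 < p.length := by omega
  have hE1p : s(p[m]'hmlt1, p[m+1]'hmlt2) ∈ edgesOf p :=
    ⟨m, hmlt2, by simp [List.get_eq_getElem]⟩
  -- the suffix of p must hit an edge of r
  have hnuT : ¬ H.Reachable (p[k]'hklen) (p[p.length - 1]'(by omega)) := by
    rw [hk, hpL]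
    intro h
    exact hnRub (h.trans hbT.symm)
  obtain ⟨m', hm'0, hm'1, hmem2⟩ := seg_hits G (edgesOf ([a, u, b] : List V)) hpch
    (show k ≤ p.length - 1 by omega) (by omega) hnuT
  have hm'k : m' = k := by
    have hmem2' := hmem2
    rw [hD] at hmem2'
    rcases hmem2' with h | h
    · rw [Sym2.eq_iff] at h
      rcases h with ⟨h1, h2⟩ | ⟨h1, h2⟩
      · rw [← hk] at h2; have := nodup_getElem_inj hpnd _ _ h2; omega
      · rw [← hk] at h1; exact nodup_getElem_inj hpnd _ _ h1
    · rw [Sym2.eq_iff] at h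
      rcases h with ⟨h1, h2⟩ | ⟨h1, h2⟩
      · rw [← hk] at h1; exact nodup_getElem_inj hpnd _ _ h1
      · rw [← hk] at h2; have := nodup_getElem_inj hpnd _ _ h2; omega
  have hm'lt1 : m' < p.length := by omega
  have hm'lt2 : m' + 1 < p.length := by omega
  have hE2p : s(p[m']'hm'lt1, p[m'+1]'hm'lt2) ∈ edgesOf p :=
    ⟨m', hm'lt2, by simp [List.get_eq_getElem]⟩
  have hEne : s(p[m]'hmlt1, p[m+1]'hmlt2) ≠
      s(p[m']'hm'lt1, p[m'+1]'hm'lt2) := by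
    intro h
    rcases Sym2.eq_iff.mp h with ⟨h1, h2⟩ | ⟨h1, h2⟩
    · have := nodup_getElem_inj hpnd _ _ h1; omega
    · have := nodup_getElem_inj hpnd _ _ h1; omega
  -- the edges of r are edges of p
  have hsubD : edgesOf ([a, u, b] : List V) ⊆ edgesOf p := by
    intro e he
    have h1 := (hD _).mp hmem1
    have h2 := (hD _).mp hmem2
    rw [hD] at he
    rcases he with rfl | rfl
    · rcases h1 with h1 | h1
      · rw [← h1]; exact hE1p
      · rcases h2 with h2 | h2
        · rw [← h2]; exact hE2p
        · exact absurd (h1.trans h2.symm) hEne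
    · rcases h1 with h1 | h1
      · rcases h2 with h2 | h2
        · exact absurd (h1.trans h2.symm) hEne
        · rw [← h2]; exact hE2p
      · rw [← h1]; exact hE1p
  apply hns
  intro hcon
  exact hHnc (SimpleGraph.Connected.mono (SimpleGraph.deleteEdges_anti hsubD) hcon)

end NSP
end
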